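/- arXiv:1005.5094 — 3 statements merged into one kernel-verified Lean document; each statement's English description precedes it below -/
import Mathlib

section
/- Let h1, h2 : D̄ → D be injective holomorphic maps from the closed unit disc into the open unit disc with disjoint images (h1(D̄) ∩ h2(D̄) = ∅). Then the limit set Λ = ⋂_{n≥1} ⋃_{(i1,...,in)∈{1,2}^n} h_{i1} ∘ ... ∘ h_{in}(D̄) is a nonempty, compact, perfect, totally disconnected subset of D (i.e., a Cantor set). -/
open Metric

/-- Composition `h_{i₁} ∘ ... ∘ h_{iₙ}` along a finite word `[i₁,...,iₙ]` in `{1,2}`. -/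
def compWord (h : Fin 2 → ℂ → ℂ) : List (Fin 2) → ℂ → ℂ
  | [] => id
  | i :: w => h i ∘ compWord h w

/-- The limit set `Λ = ⋂_{n≥1} ⋃_{(i₁,...,iₙ)∈{1,2}ⁿ} h_{i₁}∘...∘h_{iₙ}(D̄)`. -/
def limitSet (h : Fin 2 → ℂ → ℂ) : Set ℂ :=
  ⋂ (n : ℕ) (_ : 1 ≤ n), ⋃ (w : List (Fin 2)) (_ : w.length = n),
    compWord h w '' closedBall (0 : ℂ) 1


section CantorAux
open Complex

noncomputable def moeb (a z : ℂ) : ℂ := (z - a) / (1 - (starRingEnd ℂ) a * z)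

lemma normSq_identity (a z : ℂ) :
    normSq (1 - (starRingEnd ℂ) a * z) - normSq (z - a)
      = (1 - normSq a) * (1 - normSq z) := by
  simp [normSq_apply, mul_re, mul_im, conj_re, conj_im, sub_re, sub_im, one_re, one_im]
  ring

lemma denom_ne (a z : ℂ) (ha : ‖a‖ < 1) (hz : ‖z‖ ≤ 1) :
    1 - (starRingEnd ℂ) a * z ≠ 0 := by
  intro hc
  have h1 : (1 : ℂ) = (starRingEnd ℂ) a * z := by linear_combination hc
  have : ‖(starRingEnd ℂ) a * z‖ < 1 := by
    rw [norm_mul, Complex.norm_conj]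
    calc ‖a‖ * ‖z‖ ≤ ‖a‖ * 1 :=
          mul_le_mul_of_nonneg_left hz (norm_nonneg a)
      _ < 1 := by simpa using ha
  rw [← h1] at this; simp at this

lemma moeb_mem (a z : ℂ) (ha : ‖a‖ < 1) (hz : ‖z‖ < 1) :
    ‖moeb a z‖ < 1 := by
  have hd := denom_ne a z ha hz.le
  have hkey : normSq (z - a) < normSq (1 - (starRingEnd ℂ) a * z) := by
    have h1 : 0 < (1 - normSq a) * (1 - normSq z) := by
      apply mul_pos <;> · rw [sub_pos, ← Complex.sq_norm]; nlinarith [norm_nonneg a, norm_nonneg z]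
    nlinarith [normSq_identity a z]
  rw [moeb, norm_div, div_lt_one (norm_pos_iff.mpr hd)]
  rw [← Real.sqrt_lt_sqrt_iff (normSq_nonneg _)] at hkey
  simpa [Complex.norm_def] using hkey

lemma moeb_self (a : ℂ) : moeb a a = 0 := by simp [moeb]

lemma moeb_inv (a z : ℂ) (ha : ‖a‖ < 1) (hz : ‖z‖ < 1) :
    moeb (-a) (moeb a z) = z := by
  have hd1 := denom_ne a z ha hz.le
  have hd2 : 1 - (starRingEnd ℂ) (-a) * moeb a z ≠ 0 := by
    apply denom_ne (-a) _ (by simpa using ha) (moeb_mem a z ha hz).le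
  simp only [moeb] at hd2 ⊢
  field_simp at hd2 ⊢
  have hd1' : 1 - z * (starRingEnd ℂ) a ≠ 0 := by rwa [mul_comm]
  field_simp
  simp only [map_neg]; ring

lemma moeb_differentiableOn (a : ℂ) (ha : ‖a‖ < 1) :
    DifferentiableOn ℂ (moeb a) (ball 0 1) := by
  apply DifferentiableOn.div (by fun_prop) (by fun_prop)
  intro z hz
  exact denom_ne a z ha (by simpa [Complex.norm_def] using (mem_ball_zero_iff.1 hz).le)

lemma moeb_mapsTo (a : ℂ) (ha : ‖a‖ < 1) :
    Set.MapsTo (moeb a) (ball 0 1) (ball (0:ℂ) 1) := by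
  intro z hz
  rw [mem_ball_zero_iff] at hz ⊢
  exact moeb_mem a z ha hz

/-- Schwarz–Pick lemma. -/
lemma schwarz_pick {f : ℂ → ℂ} (hd : DifferentiableOn ℂ f (ball 0 1))
    (hm : Set.MapsTo f (ball 0 1) (ball (0:ℂ) 1)) {a b : ℂ}
    (ha : a ∈ ball (0:ℂ) 1) (hb : b ∈ ball (0:ℂ) 1) :
    ‖moeb (f a) (f b)‖ ≤ ‖moeb a b‖ := by
  rw [mem_ball_zero_iff] at ha hb
  have hfa : ‖f a‖ < 1 := by
    simpa [mem_ball_zero_iff] using hm (mem_ball_zero_iff.2 ha)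
  set g : ℂ → ℂ := fun z => moeb (f a) (f (moeb (-a) z)) with hg
  have hma : ‖-a‖ < 1 := by simpa using ha
  have hgd : DifferentiableOn ℂ g (ball 0 1) := by
    apply ((moeb_differentiableOn (f a) hfa).comp
      (hd.comp (moeb_differentiableOn (-a) hma) (moeb_mapsTo (-a) hma)) _)
    exact hm.comp (moeb_mapsTo (-a) hma)
  have hgm : Set.MapsTo g (ball 0 1) (ball (0:ℂ) 1) :=
    (moeb_mapsTo (f a) hfa).comp (hm.comp (moeb_mapsTo (-a) hma))
  have hg0 : g 0 = 0 := by
    have : moeb (-a) 0 = a := by simp [moeb]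
    rw [hg]; simp only [this, moeb_self]
  have key := Complex.norm_le_norm_of_mapsTo_ball hgd (hgm.mono_right ball_subset_closedBall) hg0
    (z := moeb a b) (by simpa [mem_ball_zero_iff] using moeb_mem a b ha hb)
  have : g (moeb a b) = moeb (f a) (f b) := by
    rw [hg]; simp only [moeb_inv a b ha hb]
  rwa [this] at key

lemma key_ineq (s x y : ℝ) (hs0 : 0 ≤ s) (hs1 : s ≤ 1) (hxy : x^2 + y^2 ≤ s^2) :
    (1+s)^2 * ((s-x)^2 + y^2) ≤ 4*s^2*((1-x)^2 + y^2) := by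
  have hx : -s ≤ x := by nlinarith [sq_nonneg y]
  have ht : x^2 + y^2 ≤ s^2 := hxy
  nlinarith [mul_nonneg (mul_nonneg (sub_nonneg.2 hs1) (by linarith : (0:ℝ) ≤ 1 + 3*s))
      (sub_nonneg.2 hxy),
    mul_nonneg (mul_nonneg (sub_nonneg.2 hs1) (mul_nonneg hs0 (by linarith : (0:ℝ) ≤ 2*(1-s))))
      (by linarith : (0:ℝ) ≤ s + x)]

lemma abs_moeb_scale {u v : ℂ} {r : ℝ} (hr0 : 0 < r) (hr1 : r < 1)
    (hu : ‖u‖ < r) (hv : ‖v‖ < r) :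
    ‖moeb u v‖
      ≤ (2*r/(1+r^2)) * ‖moeb (u/r) (v/r)‖ := by
  obtain ⟨w, hw⟩ : ∃ w, w = (starRingEnd ℂ) u * v := ⟨_, rfl⟩
  have hr2 : (0:ℝ) < r^2 := by positivity
  have habslt : ‖w‖ < r^2 := by
    rw [hw, norm_mul, Complex.norm_conj]
    calc ‖u‖ * ‖v‖ < r * r :=
      mul_lt_mul'' hu hv (norm_nonneg u) (norm_nonneg v)
    _ = r^2 := by ring
  have hwlt : ‖w‖ < 1 := lt_of_lt_of_le habslt (by nlinarith)
  have hcast : ((r:ℂ))^2 = ((r^2 : ℝ) : ℂ) := by push_cast; ring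
  have hd1 : (1:ℂ) - w ≠ 0 := by
    intro hc
    have h1 : (1:ℂ) = w := by linear_combination hc
    rw [← h1] at hwlt; simp at hwlt
  have hd2 : ((r:ℂ))^2 - w ≠ 0 := by
    intro hc
    have h1 : ((r:ℂ))^2 = w := by linear_combination hc
    have h2 : ‖w‖ = r^2 := by
      rw [← h1, hcast, Complex.norm_real, Real.norm_of_nonneg hr2.le]
    exact absurd h2 (ne_of_lt habslt)
  have hrC : (r:ℂ) ≠ 0 := by exact_mod_cast hr0.ne'
  have hD1 : 0 < ‖1 - w‖ := norm_pos_iff.mpr hd1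
  have hD2 : 0 < ‖(r:ℂ)^2 - w‖ := norm_pos_iff.mpr hd2
  have hcore : (1 + r^2) * ‖(r:ℂ)^2 - w‖ ≤ 2 * r^2 * ‖1 - w‖ := by
    have e1 : (‖(r:ℂ)^2 - w‖)^2 = (r^2 - w.re)^2 + w.im^2 := by
      rw [hcast, Complex.sq_norm, normSq_apply, Complex.sub_re, Complex.sub_im,
        Complex.ofReal_re, Complex.ofReal_im]
      ring
    have e2 : (‖1 - w‖)^2 = (1 - w.re)^2 + w.im^2 := by
      rw [Complex.sq_norm, normSq_apply, Complex.sub_re, Complex.sub_im,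
        Complex.one_re, Complex.one_im]
      ring
    have hxy : w.re^2 + w.im^2 ≤ (r^2)^2 := by
      have h3 := Complex.sq_norm w
      rw [normSq_apply] at h3
      nlinarith [habslt, norm_nonneg w]
    have hk := key_ineq (r^2) w.re w.im hr2.le (by nlinarith) hxy
    have h1 : ((1 + r^2) * ‖(r:ℂ)^2 - w‖)^2
        ≤ (2 * r^2 * ‖1 - w‖)^2 := by
      calc ((1 + r^2) * ‖(r:ℂ)^2 - w‖)^2
          = (1+r^2)^2 * ((r^2 - w.re)^2 + w.im^2) := by rw [mul_pow, e1]
        _ ≤ 4*(r^2)^2*((1 - w.re)^2 + w.im^2) := hk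
        _ = (2 * r^2 * ‖1 - w‖)^2 := by rw [mul_pow, mul_pow, e2]; ring
    have hA : 0 ≤ (1 + r^2) * ‖(r:ℂ)^2 - w‖ := by positivity
    have hB : 0 ≤ 2 * r^2 * ‖1 - w‖ := by positivity
    nlinarith [h1, hA, hB]
  have hm1 : ‖moeb u v‖ = ‖v - u‖ / ‖1 - w‖ := by
    rw [moeb, ← hw, norm_div]
  have hm2 : ‖moeb (u/r) (v/r)‖
      = r * ‖v - u‖ / ‖(r:ℂ)^2 - w‖ := by
    have e : (1:ℂ) - (starRingEnd ℂ) (u/r) * (v/r) = ((r:ℂ)^2 - w)/((r:ℂ)^2) := by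
      rw [map_div₀, Complex.conj_ofReal, hw]
      field_simp
    have e2 : v/(r:ℂ) - u/(r:ℂ) = (v - u)/(r:ℂ) := by ring
    rw [moeb, e, e2, norm_div, norm_div, norm_div, norm_pow, Complex.norm_real,
      Real.norm_of_nonneg hr0.le]
    rw [div_div_div_eq]
    rw [div_eq_div_iff (by positivity) hD2.ne']
    ring
  rw [hm1, hm2, div_le_iff₀ hD1]
  have hfrac : ‖(r:ℂ)^2 - w‖ ≤ 2*r^2*‖1 - w‖/(1+r^2) := by
    rw [le_div_iff₀ (by positivity)]; linarith [hcore]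
  calc ‖v - u‖
      = ‖v - u‖/‖(r:ℂ)^2 - w‖ * ‖(r:ℂ)^2 - w‖ := by
        field_simp
    _ ≤ ‖v - u‖/‖(r:ℂ)^2 - w‖ * (2*r^2*‖1 - w‖/(1+r^2)) :=
        mul_le_mul_of_nonneg_left hfrac (by positivity)
    _ = 2*r/(1+r^2) * (r * ‖v - u‖ / ‖(r:ℂ)^2 - w‖) * ‖1 - w‖ := by
        field_simp

/-- One-step strict contraction in the pseudo-hyperbolic metric. -/
lemma step_contract {f : ℂ → ℂ} {r : ℝ} (hr0 : 0 < r) (hr1 : r < 1)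
    (hd : DifferentiableOn ℂ f (ball 0 1))
    (hm : Set.MapsTo f (ball 0 1) (ball (0:ℂ) r))
    {a b : ℂ} (ha : a ∈ ball (0:ℂ) 1) (hb : b ∈ ball (0:ℂ) 1) :
    ‖moeb (f a) (f b)‖ ≤ (2*r/(1+r^2)) * ‖moeb a b‖ := by
  have hrC : (r:ℂ) ≠ 0 := by exact_mod_cast hr0.ne'
  set F : ℂ → ℂ := fun z => f z / r with hF
  have hFd : DifferentiableOn ℂ F (ball 0 1) := hd.div_const _
  have hFm : Set.MapsTo F (ball 0 1) (ball (0:ℂ) 1) := by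
    intro z hz
    rw [mem_ball_zero_iff]
    have h1 := mem_ball_zero_iff.1 (hm hz)
    rw [hF]
    calc ‖f z / (r:ℂ)‖ = ‖f z‖ / r := by
          rw [norm_div, Complex.norm_real, Real.norm_of_nonneg hr0.le]
      _ < 1 := by rw [div_lt_one hr0]; exact h1
  have hsp := schwarz_pick hFd hFm ha hb
  have hfa : ‖f a‖ < r := mem_ball_zero_iff.1 (hm ha)
  have hfb : ‖f b‖ < r := mem_ball_zero_iff.1 (hm hb)
  have hscale := abs_moeb_scale hr0 hr1 hfa hfb
  calc ‖moeb (f a) (f b)‖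
      ≤ (2*r/(1+r^2)) * ‖moeb (f a / r) (f b / r)‖ := hscale
    _ = (2*r/(1+r^2)) * ‖moeb (F a) (F b)‖ := rfl
    _ ≤ (2*r/(1+r^2)) * ‖moeb a b‖ :=
        mul_le_mul_of_nonneg_left hsp (by positivity)

/-- Euclidean distance is at most twice the pseudo-hyperbolic distance. -/
lemma dist_le_two_mul_abs_moeb {a b : ℂ} (ha : ‖a‖ < 1) (hb : ‖b‖ < 1) :
    dist a b ≤ 2 * ‖moeb a b‖ := by
  have hden : ‖1 - (starRingEnd ℂ) a * b‖ ≤ 2 := by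
    calc ‖1 - (starRingEnd ℂ) a * b‖
        ≤ ‖(1:ℂ)‖ + ‖(starRingEnd ℂ) a * b‖ := by
          simpa using norm_sub_le (1:ℂ) ((starRingEnd ℂ) a * b)
      _ ≤ 1 + 1 := by
          gcongr
          · simp
          · rw [norm_mul, Complex.norm_conj]; nlinarith [norm_nonneg a, norm_nonneg b]
      _ = 2 := by norm_num
  have hdpos : 0 < ‖1 - (starRingEnd ℂ) a * b‖ := norm_pos_iff.mpr (denom_ne a b ha hb.le)
  rw [moeb, norm_div]
  rw [dist_eq, ← norm_neg]
  have : -(a - b) = b - a := by ring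
  rw [this]
  rw [mul_div_assoc', le_div_iff₀ hdpos]
  nlinarith [norm_nonneg (b - a)]

/-- Pseudo-hyperbolic distance bounded when points are in a small ball. -/
lemma abs_moeb_le {a b : ℂ} {r : ℝ} (hr1 : r < 1) (ha : ‖a‖ ≤ r) (hb : ‖b‖ ≤ r)
    (hr0 : 0 ≤ r) :
    ‖moeb a b‖ ≤ 2 / (1 - r^2) := by
  have hden : 1 - r^2 ≤ ‖1 - (starRingEnd ℂ) a * b‖ := by
    have h1 : ‖(starRingEnd ℂ) a * b‖ ≤ r^2 := by
      rw [norm_mul, Complex.norm_conj]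
      calc ‖a‖ * ‖b‖ ≤ r * r :=
        mul_le_mul ha hb (norm_nonneg b) hr0
      _ = r^2 := by ring
    calc 1 - r^2 ≤ 1 - ‖(starRingEnd ℂ) a * b‖ := by linarith
      _ = ‖(1:ℂ)‖ - ‖(starRingEnd ℂ) a * b‖ := by simp
      _ ≤ ‖1 - (starRingEnd ℂ) a * b‖ := norm_sub_norm_le _ _
  have hnum : ‖b - a‖ ≤ 2 := by
    calc ‖b - a‖ ≤ ‖b‖ + ‖a‖ := norm_sub_le b a
    _ ≤ 2 := by nlinarith
  have hpos : (0:ℝ) < 1 - r^2 := by nlinarith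
  rw [moeb, norm_div]
  exact div_le_div₀ (by norm_num) hnum hpos hden

lemma compWord_append (h : Fin 2 → ℂ → ℂ) (w w' : List (Fin 2)) :
    compWord h (w ++ w') = compWord h w ∘ compWord h w' := by
  induction w with
  | nil => rfl
  | cons i w ih => simp [compWord, ih, Function.comp_assoc]

variable {h : Fin 2 → ℂ → ℂ}

lemma cw_mapsTo_cb (hmaps : ∀ i, Set.MapsTo (h i) (closedBall (0 : ℂ) 1) (ball (0 : ℂ) 1))
    (w : List (Fin 2)) :
    Set.MapsTo (compWord h w) (closedBall (0:ℂ) 1) (closedBall (0:ℂ) 1) := by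
  induction w with
  | nil => exact Set.mapsTo_id _
  | cons i w ih => exact (((hmaps i).mono_right ball_subset_closedBall).comp ih)

lemma cw_mapsTo_ball (hmaps : ∀ i, Set.MapsTo (h i) (closedBall (0 : ℂ) 1) (ball (0 : ℂ) 1))
    (w : List (Fin 2)) :
    Set.MapsTo (compWord h w) (ball (0:ℂ) 1) (ball (0:ℂ) 1) := by
  induction w with
  | nil => exact Set.mapsTo_id _
  | cons i w ih => exact ((hmaps i).mono_left ball_subset_closedBall).comp ih

lemma cw_mapsTo_cb_ball (hmaps : ∀ i, Set.MapsTo (h i) (closedBall (0 : ℂ) 1) (ball (0 : ℂ) 1))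
    (w : List (Fin 2)) (hw : w ≠ []) :
    Set.MapsTo (compWord h w) (closedBall (0:ℂ) 1) (ball (0:ℂ) 1) := by
  cases w with
  | nil => exact absurd rfl hw
  | cons i w => exact (hmaps i).comp (cw_mapsTo_cb hmaps w)

lemma cw_contOn (hcont : ∀ i, ContinuousOn (h i) (closedBall (0 : ℂ) 1))
    (hmaps : ∀ i, Set.MapsTo (h i) (closedBall (0 : ℂ) 1) (ball (0 : ℂ) 1))
    (w : List (Fin 2)) :
    ContinuousOn (compWord h w) (closedBall (0:ℂ) 1) := by
  induction w with
  | nil => exact continuousOn_id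
  | cons i w ih => exact (hcont i).comp ih (cw_mapsTo_cb hmaps w)

lemma cw_injOn (hinj : ∀ i, Set.InjOn (h i) (closedBall (0 : ℂ) 1))
    (hmaps : ∀ i, Set.MapsTo (h i) (closedBall (0 : ℂ) 1) (ball (0 : ℂ) 1))
    (w : List (Fin 2)) :
    Set.InjOn (compWord h w) (closedBall (0:ℂ) 1) := by
  induction w with
  | nil => exact Set.injOn_id _
  | cons i w ih => exact (hinj i).comp ih (cw_mapsTo_cb hmaps w)

lemma cw_diffOn (hhol : ∀ i, DifferentiableOn ℂ (h i) (ball (0 : ℂ) 1))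
    (hmaps : ∀ i, Set.MapsTo (h i) (closedBall (0 : ℂ) 1) (ball (0 : ℂ) 1))
    (w : List (Fin 2)) :
    DifferentiableOn ℂ (compWord h w) (ball (0:ℂ) 1) := by
  induction w with
  | nil => exact differentiableOn_id
  | cons i w ih =>
      exact ((hhol i).comp ih (cw_mapsTo_ball hmaps w)).congr (fun x _ => rfl)


lemma cw_contract {r : ℝ} (hhol : ∀ i, DifferentiableOn ℂ (h i) (ball (0 : ℂ) 1))
    (hmaps : ∀ i, Set.MapsTo (h i) (closedBall (0 : ℂ) 1) (ball (0 : ℂ) 1))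
    (hball : ∀ i, Set.MapsTo (h i) (closedBall (0 : ℂ) 1) (ball (0:ℂ) r))
    (hr0 : 0 < r) (hr1 : r < 1) (w : List (Fin 2)) {a b : ℂ}
    (ha : a ∈ ball (0:ℂ) 1) (hb : b ∈ ball (0:ℂ) 1) :
    ‖moeb (compWord h w a) (compWord h w b)‖
      ≤ (2*r/(1+r^2))^w.length * ‖moeb a b‖ := by
  induction w with
  | nil => simp [compWord]
  | cons i w ih =>
      have h1 := step_contract (f := h i) hr0 hr1 (hhol i)
        ((hball i).mono_left ball_subset_closedBall)
        (cw_mapsTo_ball hmaps w ha) (cw_mapsTo_ball hmaps w hb)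
      have hk0 : (0:ℝ) ≤ 2*r/(1+r^2) := by positivity
      calc ‖moeb (compWord h (i::w) a) (compWord h (i::w) b)‖
          = ‖moeb (h i (compWord h w a)) (h i (compWord h w b))‖ := rfl
        _ ≤ (2*r/(1+r^2)) * ‖moeb (compWord h w a) (compWord h w b)‖ := h1
        _ ≤ (2*r/(1+r^2)) * ((2*r/(1+r^2))^w.length * ‖moeb a b‖) :=
            mul_le_mul_of_nonneg_left ih hk0
        _ = (2*r/(1+r^2))^(i::w).length * ‖moeb a b‖ := by
            rw [List.length_cons, pow_succ]; ring

lemma cw_dist_le {r : ℝ} (hhol : ∀ i, DifferentiableOn ℂ (h i) (ball (0 : ℂ) 1))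
    (hmaps : ∀ i, Set.MapsTo (h i) (closedBall (0 : ℂ) 1) (ball (0 : ℂ) 1))
    (hball : ∀ i, Set.MapsTo (h i) (closedBall (0 : ℂ) 1) (ball (0:ℂ) r))
    (hr0 : 0 < r) (hr1 : r < 1) (w : List (Fin 2)) (hw : w ≠ []) {x y : ℂ}
    (hx : x ∈ closedBall (0:ℂ) 1) (hy : y ∈ closedBall (0:ℂ) 1) :
    dist (compWord h w x) (compWord h w y)
      ≤ (4/(1-r^2)) * (2*r/(1+r^2))^(w.length - 1) := by
  have hsplit := List.dropLast_append_getLast hw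
  set j := w.getLast hw
  set w' := w.dropLast with hw'
  have ha : h j x ∈ ball (0:ℂ) r := hball j hx
  have hb : h j y ∈ ball (0:ℂ) r := hball j hy
  have hsub : ball (0:ℂ) r ⊆ ball (0:ℂ) 1 := ball_subset_ball hr1.le
  have ha1 : h j x ∈ ball (0:ℂ) 1 := hsub ha
  have hb1 : h j y ∈ ball (0:ℂ) 1 := hsub hb
  have e : ∀ z, compWord h w z = compWord h w' (h j z) := by
    intro z
    conv_lhs => rw [← hsplit]
    rw [compWord_append]
    rfl
  rw [e x, e y]
  have hAa : ‖compWord h w' (h j x)‖ < 1 :=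
    mem_ball_zero_iff.1 (cw_mapsTo_ball hmaps w' ha1)
  have hAb : ‖compWord h w' (h j y)‖ < 1 :=
    mem_ball_zero_iff.1 (cw_mapsTo_ball hmaps w' hb1)
  have hlen : w'.length = w.length - 1 := List.length_dropLast
  have hr2 : (0:ℝ) < 1 - r^2 := by nlinarith
  calc dist (compWord h w' (h j x)) (compWord h w' (h j y))
      ≤ 2 * ‖moeb (compWord h w' (h j x)) (compWord h w' (h j y))‖ :=
        dist_le_two_mul_abs_moeb hAa hAb
    _ ≤ 2 * ((2*r/(1+r^2))^w'.length * ‖moeb (h j x) (h j y)‖) := by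
        apply mul_le_mul_of_nonneg_left _ (by norm_num)
        exact cw_contract hhol hmaps hball hr0 hr1 w' ha1 hb1
    _ ≤ 2 * ((2*r/(1+r^2))^w'.length * (2/(1-r^2))) := by
        apply mul_le_mul_of_nonneg_left _ (by norm_num)
        apply mul_le_mul_of_nonneg_left _ (by positivity)
        exact abs_moeb_le hr1 (mem_ball_zero_iff.1 ha).le (mem_ball_zero_iff.1 hb).le hr0.le
    _ = (4/(1-r^2)) * (2*r/(1+r^2))^(w.length - 1) := by
        rw [hlen]; field_simp; ring

lemma exists_r (hcont : ∀ i, ContinuousOn (h i) (closedBall (0 : ℂ) 1))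
    (hmaps : ∀ i, Set.MapsTo (h i) (closedBall (0 : ℂ) 1) (ball (0 : ℂ) 1)) :
    ∃ r : ℝ, 0 < r ∧ r < 1 ∧
      ∀ i, Set.MapsTo (h i) (closedBall (0:ℂ) 1) (ball (0:ℂ) r) := by
  set K : Set ℂ := h 0 '' closedBall 0 1 ∪ h 1 '' closedBall 0 1 with hK
  have hKc : IsCompact K :=
    ((isCompact_closedBall _ _).image_of_continuousOn (hcont 0)).union
      ((isCompact_closedBall _ _).image_of_continuousOn (hcont 1))
  have hKne : K.Nonempty :=
    ⟨h 0 0, Or.inl ⟨0, mem_closedBall_self zero_le_one, rfl⟩⟩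
  obtain ⟨z₀, hz₀K, hz₀⟩ := hKc.exists_isMaxOn hKne
    (continuous_norm.continuousOn : ContinuousOn (fun z : ℂ => ‖z‖) K)
  have hKsub : K ⊆ ball (0:ℂ) 1 := by
    rintro z (⟨x, hx, rfl⟩ | ⟨x, hx, rfl⟩)
    exacts [hmaps 0 hx, hmaps 1 hx]
  have hM : ‖z₀‖ < 1 := mem_ball_zero_iff.1 (hKsub hz₀K)
  have hM0 : 0 ≤ ‖z₀‖ := norm_nonneg _
  refine ⟨(‖z₀‖ + 1)/2, by linarith, by linarith, fun i x hx => ?_⟩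
  rw [mem_ball_zero_iff]
  have : h i x ∈ K := by
    fin_cases i
    · exact Or.inl ⟨x, hx, rfl⟩
    · exact Or.inr ⟨x, hx, rfl⟩
  have h2 : ‖h i x‖ ≤ ‖z₀‖ := hz₀ this
  linarith

lemma cw_image_subset (hmaps : ∀ i, Set.MapsTo (h i) (closedBall (0 : ℂ) 1) (ball (0 : ℂ) 1))
    (i : Fin 2) (w : List (Fin 2)) :
    compWord h (i::w) '' closedBall 0 1 ⊆ h i '' closedBall 0 1 := by
  have : compWord h (i::w) '' closedBall 0 1 = h i '' (compWord h w '' closedBall 0 1) := by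
    rw [← Set.image_comp]; rfl
  rw [this]
  exact Set.image_mono ((cw_mapsTo_cb hmaps w).image_subset)

lemma cw_disjoint (hinj : ∀ i, Set.InjOn (h i) (closedBall (0 : ℂ) 1))
    (hmaps : ∀ i, Set.MapsTo (h i) (closedBall (0 : ℂ) 1) (ball (0 : ℂ) 1))
    (hdisj : (h 0 '' closedBall (0 : ℂ) 1) ∩ (h 1 '' closedBall (0 : ℂ) 1) = ∅) :
    ∀ w w' : List (Fin 2), w.length = w'.length → w ≠ w' →
      compWord h w '' closedBall 0 1 ∩ compWord h w' '' closedBall 0 1 = ∅ := by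
  have hpair : ∀ i j : Fin 2, i ≠ j →
      (h i '' closedBall (0:ℂ) 1) ∩ (h j '' closedBall (0:ℂ) 1) = ∅ := by
    intro i j hij
    fin_cases i <;> fin_cases j <;>
      first
        | exact absurd rfl hij
        | exact hdisj
        | (rw [Set.inter_comm]; exact hdisj)
  intro w
  induction w with
  | nil =>
      intro w' hlen hne
      cases w' with
      | nil => exact absurd rfl hne
      | cons j w'' => simp at hlen
  | cons i w ih =>
      intro w' hlen hne
      cases w' with
      | nil => simp at hlen
      | cons j w'' =>
          rcases eq_or_ne i j with rfl | hij
          · have hww : w ≠ w'' := by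
              intro hc; exact hne (by rw [hc])
            have hlen' : w.length = w''.length := by simpa using hlen
            have e1 : compWord h (i::w) '' closedBall 0 1
                = h i '' (compWord h w '' closedBall 0 1) := by
              rw [← Set.image_comp]; rfl
            have e2 : compWord h (i::w'') '' closedBall 0 1
                = h i '' (compWord h w'' '' closedBall 0 1) := by
              rw [← Set.image_comp]; rfl
            rw [e1, e2, ← (hinj i).image_inter ((cw_mapsTo_cb hmaps w).image_subset)
              ((cw_mapsTo_cb hmaps w'').image_subset), ih w'' hlen' hww, Set.image_empty]
          · apply Set.eq_empty_of_subset_empty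
            calc compWord h (i::w) '' closedBall 0 1 ∩ compWord h (j::w'') '' closedBall 0 1
                ⊆ (h i '' closedBall 0 1) ∩ (h j '' closedBall 0 1) :=
                  Set.inter_subset_inter (cw_image_subset hmaps i w) (cw_image_subset hmaps j w'')
              _ = ∅ := hpair i j hij


end CantorAux

/-- If `h₁, h₂ : D̄ → D` are injective holomorphic maps from the closed unit
disc into the open unit disc with disjoint images, then the limit set
`Λ = ⋂_{n≥1} ⋃_{words of length n} h_{i₁}∘...∘h_{iₙ}(D̄)` is a nonempty compact perfect
totally disconnected subset of `D` (a Cantor set). -/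
theorem limit_set_is_cantor_set
    (h : Fin 2 → ℂ → ℂ)
    (hcont : ∀ i, ContinuousOn (h i) (closedBall (0 : ℂ) 1))
    (hhol : ∀ i, DifferentiableOn ℂ (h i) (ball (0 : ℂ) 1))
    (hinj : ∀ i, Set.InjOn (h i) (closedBall (0 : ℂ) 1))
    (hmaps : ∀ i, Set.MapsTo (h i) (closedBall (0 : ℂ) 1) (ball (0 : ℂ) 1))
    (hdisj : (h 0 '' closedBall (0 : ℂ) 1) ∩ (h 1 '' closedBall (0 : ℂ) 1) = ∅) :
    (limitSet h).Nonempty ∧ IsCompact (limitSet h) ∧ Perfect (limitSet h)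
      ∧ IsTotallyDisconnected (limitSet h) ∧ limitSet h ⊆ ball (0 : ℂ) 1 := by
  obtain ⟨r, hr0, hr1, hball⟩ := exists_r hcont hmaps
  set k := 2*r/(1+r^2) with hkdef
  have hk0 : 0 < k := by positivity
  have hk1 : k < 1 := by
    rw [hkdef, div_lt_one (by positivity)]
    nlinarith
  have hr2 : (0:ℝ) < 1 - r^2 := by nlinarith
  set S : ℕ → Set ℂ := fun n => ⋃ (w : List (Fin 2)) (_ : w.length = n),
    compWord h w '' closedBall (0:ℂ) 1 with hSdef
  have hScompact : ∀ n, IsCompact (S n) := by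
    intro n
    have e : S n = ⋃ w ∈ {w : List (Fin 2) | w.length = n},
        compWord h w '' closedBall 0 1 := rfl
    rw [e]
    exact (List.finite_length_eq (Fin 2) n).isCompact_biUnion fun w _ =>
      (isCompact_closedBall _ _).image_of_continuousOn (cw_contOn hcont hmaps w)
  have hSclosed : ∀ n, IsClosed (S n) := fun n => (hScompact n).isClosed
  have hSne : ∀ n, (S n).Nonempty := by
    intro n
    exact ⟨compWord h (List.replicate n 0) 0, Set.mem_iUnion₂.2
      ⟨List.replicate n 0, by simp, ⟨0, mem_closedBall_self zero_le_one, rfl⟩⟩⟩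
  have hSsucc : ∀ n, S (n+1) ⊆ S n := by
    intro n x hx
    obtain ⟨w, hwlen, hxw⟩ := Set.mem_iUnion₂.1 hx
    have hwne : w ≠ [] := by intro hc; rw [hc] at hwlen; simp at hwlen
    obtain ⟨z, hz, rfl⟩ := hxw
    apply Set.mem_iUnion₂.2
    refine ⟨w.dropLast, by simp [List.length_dropLast, hwlen], ?_⟩
    have e : compWord h w = compWord h w.dropLast ∘ compWord h [w.getLast hwne] := by
      rw [← compWord_append, List.dropLast_append_getLast hwne]
    rw [e]
    exact ⟨compWord h [w.getLast hwne] z,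
      ball_subset_closedBall (hmaps (w.getLast hwne) hz), rfl⟩
  have hSanti : ∀ m n, m ≤ n → S n ⊆ S m := fun m n hmn =>
    (antitone_nat_of_succ_le hSsucc) hmn
  have hLam : limitSet h = ⋂ n, S (n+1) := by
    apply Set.Subset.antisymm
    · intro x hx
      simp only [limitSet, Set.mem_iInter] at hx
      exact Set.mem_iInter.2 fun n => hx (n+1) (Nat.succ_le_succ (Nat.zero_le n))
    · intro x hx
      rw [Set.mem_iInter] at hx
      simp only [limitSet, Set.mem_iInter]
      intro n hn
      have := hx (n-1)
      rwa [Nat.sub_add_cancel hn] at this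
  have hmemS : ∀ z ∈ limitSet h, ∀ n, 1 ≤ n → z ∈ S n := by
    intro z hz n hn
    rw [hLam] at hz
    have := Set.mem_iInter.1 hz (n-1)
    rwa [Nat.sub_add_cancel hn] at this
  have hclosed : IsClosed (limitSet h) := by
    rw [hLam]; exact isClosed_iInter fun n => hSclosed (n+1)
  have hcpt : IsCompact (limitSet h) := (hScompact 1).of_isClosed_subset hclosed
    (by rw [hLam]; exact Set.iInter_subset _ 0)
  have hne : (limitSet h).Nonempty := by
    rw [hLam]
    exact IsCompact.nonempty_iInter_of_sequence_nonempty_isCompact_isClosed _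
      (fun n => hSsucc (n+1)) (fun n => hSne (n+1)) (hScompact 1)
      (fun n => hSclosed (n+1))
  have hsubball : limitSet h ⊆ ball (0:ℂ) 1 := by
    intro x hx
    have hx1 : x ∈ S 1 := hmemS x hx 1 le_rfl
    obtain ⟨w, hwlen, ⟨z, hz, rfl⟩⟩ := Set.mem_iUnion₂.1 hx1
    exact cw_mapsTo_cb_ball hmaps w (by intro hc; rw [hc] at hwlen; simp at hwlen) hz
  -- density of the limit set in every cylinder
  have hdense : ∀ w : List (Fin 2),
      (limitSet h ∩ compWord h w '' closedBall 0 1).Nonempty := by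
    intro w
    set T : ℕ → Set ℂ := fun m => compWord h (w ++ List.replicate m 0) '' closedBall 0 1
      with hTdef
    have hTsub : ∀ m, T (m+1) ⊆ T m := by
      intro m
      have e : w ++ List.replicate (m+1) (0 : Fin 2)
          = (w ++ List.replicate m 0) ++ [0] := by
        rw [List.replicate_succ', List.append_assoc]
      show compWord h (w ++ List.replicate (m+1) 0) '' closedBall 0 1 ⊆ _
      rw [e, compWord_append, Set.image_comp]
      exact Set.image_mono (cw_mapsTo_cb hmaps [0]).image_subset
    have hTcpt : ∀ m, IsCompact (T m) := fun m =>
      (isCompact_closedBall _ _).image_of_continuousOn (cw_contOn hcont hmaps _)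
    have hTne : ∀ m, (T m).Nonempty := fun m =>
      ⟨_, ⟨0, mem_closedBall_self zero_le_one, rfl⟩⟩
    obtain ⟨x, hx⟩ := IsCompact.nonempty_iInter_of_sequence_nonempty_isCompact_isClosed
      T hTsub hTne (hTcpt 0) (fun m => (hTcpt m).isClosed)
    rw [Set.mem_iInter] at hx
    refine ⟨x, ?_, ?_⟩
    · simp only [limitSet, Set.mem_iInter]
      intro n hn
      have h1 : T n ⊆ S (w.length + n) := fun y hy =>
        Set.mem_iUnion₂.2 ⟨w ++ List.replicate n 0, by simp, hy⟩
      exact hSanti n _ (Nat.le_add_left n w.length) (h1 (hx n))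
    · have h0 := hx 0
      simpa [hTdef] using h0
  -- diameter estimate
  have hdiam : ∀ (w : List (Fin 2)), w ≠ [] →
      ∀ x ∈ compWord h w '' closedBall (0:ℂ) 1,
      ∀ y ∈ compWord h w '' closedBall (0:ℂ) 1,
        dist x y ≤ (4/(1-r^2)) * k^(w.length - 1) := by
    rintro w hw _ ⟨a, ha, rfl⟩ _ ⟨b, hb, rfl⟩
    exact cw_dist_le hhol hmaps hball hr0 hr1 w hw ha hb
  have hsmall : ∀ ε : ℝ, 0 < ε → ∃ n : ℕ, 1 ≤ n ∧ (4/(1-r^2)) * k^(n-1) < ε := by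
    intro ε hε
    obtain ⟨m, hm⟩ := exists_pow_lt_of_lt_one (x := ε * (1-r^2)/4) (by positivity) hk1
    refine ⟨m+1, Nat.le_add_left 1 m, ?_⟩
    simp only [Nat.add_sub_cancel]
    calc (4/(1-r^2)) * k^m < (4/(1-r^2)) * (ε*(1-r^2)/4) :=
          mul_lt_mul_of_pos_left hm (by positivity)
      _ = ε := by field_simp
  -- perfectness
  have hperf : Perfect (limitSet h) := by
    refine ⟨hclosed, fun x hx => ?_⟩
    rw [accPt_iff_nhds]
    intro U hU
    obtain ⟨ε, hε, hballU⟩ := Metric.mem_nhds_iff.1 hU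
    obtain ⟨n, hn1, hnlt⟩ := hsmall ε hε
    have hxS : x ∈ S n := hmemS x hx n hn1
    obtain ⟨w, hwlen, hxw⟩ := Set.mem_iUnion₂.1 hxS
    have hwne : w ≠ [] := by intro hc; rw [hc] at hwlen; simp at hwlen; omega
    have hchild : ∀ c : Fin 2, compWord h (w ++ [c]) '' closedBall 0 1
        ⊆ compWord h w '' closedBall 0 1 := by
      intro c
      rw [compWord_append, Set.image_comp]
      exact Set.image_mono (cw_mapsTo_cb hmaps [c]).image_subset
    have hcdisj := cw_disjoint hinj hmaps hdisj (w ++ [0]) (w ++ [1]) (by simp) (by simp)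
    have hex : ∃ c : Fin 2, x ∉ compWord h (w ++ [c]) '' closedBall 0 1 := by
      by_contra hc
      push_neg at hc
      have hmem := Set.mem_inter (hc 0) (hc 1)
      rw [hcdisj] at hmem
      exact hmem
    obtain ⟨c, hc⟩ := hex
    obtain ⟨y, hyΛ, hyw⟩ := hdense (w ++ [c])
    refine ⟨y, ⟨hballU ?_, hyΛ⟩, fun hyx => hc (hyx ▸ hyw)⟩
    rw [mem_ball]
    calc dist y x ≤ (4/(1-r^2)) * k^(w.length - 1) :=
          hdiam w hwne y (hchild c hyw) x hxw
      _ < ε := by rw [hwlen]; exact hnlt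
  -- total disconnectedness
  have htd : IsTotallyDisconnected (limitSet h) := by
    intro t hts htpre
    intro x hx y hy
    have key : ∀ n, 1 ≤ n → dist x y ≤ (4/(1-r^2)) * k^(n-1) := by
      intro n hn
      have hxS : x ∈ S n := hmemS x (hts hx) n hn
      obtain ⟨w, hwlen, hxw⟩ := Set.mem_iUnion₂.1 hxS
      have hwne : w ≠ [] := by intro hc; rw [hc] at hwlen; simp at hwlen; omega
      set B : Set ℂ := ⋃ (w' : List (Fin 2)) (_ : w'.length = n ∧ w' ≠ w),
        compWord h w' '' closedBall 0 1 with hBdef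
      have hBcpt : IsCompact B := by
        have e : B = ⋃ w' ∈ {w' : List (Fin 2) | w'.length = n ∧ w' ≠ w},
            compWord h w' '' closedBall 0 1 := rfl
        rw [e]
        exact (((List.finite_length_eq (Fin 2) n).subset (fun _ hp => hp.1)).isCompact_biUnion
          (fun w' _ => (isCompact_closedBall _ _).image_of_continuousOn
            (cw_contOn hcont hmaps w')))
      have hAcpt : IsCompact (compWord h w '' closedBall (0:ℂ) 1) :=
        (isCompact_closedBall _ _).image_of_continuousOn (cw_contOn hcont hmaps w)
      have hABdisj : Disjoint (compWord h w '' closedBall (0:ℂ) 1) B := by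
        rw [Set.disjoint_left]
        intro z hzA hzB
        obtain ⟨w', hw', hzw'⟩ := Set.mem_iUnion₂.1 hzB
        have := cw_disjoint hinj hmaps hdisj w w' (by rw [hwlen, hw'.1]) (Ne.symm hw'.2)
        have hmem := Set.mem_inter hzA hzw'
        rw [this] at hmem
        exact hmem
      obtain ⟨U, V, hU, hV, hAU, hBV, hUV⟩ :=
        SeparatedNhds.of_isCompact_isCompact hAcpt hBcpt hABdisj
      have hcover : t ⊆ U ∪ V := by
        intro z hz
        have hzS : z ∈ S n := hmemS z (hts hz) n hn
        obtain ⟨w', hw'len, hzw'⟩ := Set.mem_iUnion₂.1 hzS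
        rcases eq_or_ne w' w with rfl | hne
        · exact Or.inl (hAU hzw')
        · exact Or.inr (hBV (Set.mem_iUnion₂.2 ⟨w', ⟨hw'len, hne⟩, hzw'⟩))
      have htU : t ⊆ U :=
        htpre.subset_left_of_subset_union hU hV hUV hcover ⟨x, hx, hAU hxw⟩
      have hyA : y ∈ compWord h w '' closedBall (0:ℂ) 1 := by
        have hyS : y ∈ S n := hmemS y (hts hy) n hn
        obtain ⟨w', hw'len, hyw'⟩ := Set.mem_iUnion₂.1 hyS
        rcases eq_or_ne w' w with rfl | hne
        · exact hyw'
        · exact absurd (hBV (Set.mem_iUnion₂.2 ⟨w', ⟨hw'len, hne⟩, hyw'⟩))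
            (Set.disjoint_left.1 hUV (htU hy))
      calc dist x y ≤ (4/(1-r^2)) * k^(w.length - 1) := hdiam w hwne x hxw y hyA
        _ = (4/(1-r^2)) * k^(n - 1) := by rw [hwlen]
    have hd0 : dist x y ≤ 0 := by
      by_contra hpos
      push_neg at hpos
      obtain ⟨n, hn1, hlt⟩ := hsmall (dist x y) hpos
      exact absurd (key n hn1) (not_le.2 hlt)
    exact dist_le_zero.1 hd0
  exact ⟨hne, hcpt, hperf, htd, hsubball⟩
end

section
/- (Zassenhaus-type non-discreteness) There is a neighborhood U of the identity in PSL(2,ℂ) such that any subgroup of PSL(2,ℂ) generated by elements of U is either discrete-and-nilpotent or non-discrete; consequently, a non-abelian (more precisely, non-nilpotent) subgroup generated by elements sufficiently close to the identity is non-discrete. -/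
open Filter Topology
open scoped commutatorElement

/-- `SL(2,ℂ)`, topologized as a subspace of the matrices. -/
abbrev SL2C := Matrix.SpecialLinearGroup (Fin 2) ℂ

noncomputable instance : TopologicalSpace SL2C :=
  TopologicalSpace.induced (fun g => (g : Matrix (Fin 2) (Fin 2) ℂ)) inferInstance

/-- `PSL(2,ℂ) = SL(2,ℂ)/center`, with the quotient topology. -/
abbrev PSL2C := SL2C ⧸ Subgroup.center SL2C

/-! ### An elementary "norm" on 2×2 complex matrices -/

/-- The sum of the norms of the entries. -/
noncomputable def nn (M : Matrix (Fin 2) (Fin 2) ℂ) : ℝ := ∑ i, ∑ j, ‖M i j‖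

lemma nn_expand (M : Matrix (Fin 2) (Fin 2) ℂ) :
    nn M = ‖M 0 0‖ + ‖M 0 1‖ + (‖M 1 0‖ + ‖M 1 1‖) := by
  simp [nn, Fin.sum_univ_two]

lemma nn_nonneg (M : Matrix (Fin 2) (Fin 2) ℂ) : 0 ≤ nn M := by
  rw [nn_expand]; positivity

lemma entry_le_nn (M : Matrix (Fin 2) (Fin 2) ℂ) (i j : Fin 2) : ‖M i j‖ ≤ nn M := by
  rw [nn_expand]
  have := norm_nonneg (M 0 0); have := norm_nonneg (M 0 1)
  have := norm_nonneg (M 1 0); have := norm_nonneg (M 1 1)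
  fin_cases i <;> fin_cases j <;> simp only [Fin.zero_eta, Fin.mk_one, Fin.isValue] <;> linarith

lemma nn_add_le (M N : Matrix (Fin 2) (Fin 2) ℂ) : nn (M + N) ≤ nn M + nn N := by
  simp only [nn_expand, Matrix.add_apply]
  have h : ∀ a b : ℂ, ‖a + b‖ ≤ ‖a‖ + ‖b‖ := fun a b => norm_add_le a b
  have := h (M 0 0) (N 0 0); have := h (M 0 1) (N 0 1)
  have := h (M 1 0) (N 1 0); have := h (M 1 1) (N 1 1)
  linarith

lemma nn_mul_le (M N : Matrix (Fin 2) (Fin 2) ℂ) : nn (M * N) ≤ nn M * nn N := by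
  simp only [nn_expand, Matrix.mul_apply, Fin.sum_univ_two]
  have h : ∀ a b : ℂ, ‖a + b‖ ≤ ‖a‖ + ‖b‖ := fun a b => norm_add_le a b
  have h2 : ∀ a b : ℂ, ‖a * b‖ = ‖a‖ * ‖b‖ := fun a b => norm_mul a b
  have e00 := h (M 0 0 * N 0 0) (M 0 1 * N 1 0)
  have e01 := h (M 0 0 * N 0 1) (M 0 1 * N 1 1)
  have e10 := h (M 1 0 * N 0 0) (M 1 1 * N 1 0)
  have e11 := h (M 1 0 * N 0 1) (M 1 1 * N 1 1)
  simp only [h2] at e00 e01 e10 e11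
  have := norm_nonneg (M 0 0); have := norm_nonneg (M 0 1)
  have := norm_nonneg (M 1 0); have := norm_nonneg (M 1 1)
  have := norm_nonneg (N 0 0); have := norm_nonneg (N 0 1)
  have := norm_nonneg (N 1 0); have := norm_nonneg (N 1 1)
  nlinarith

lemma nn_one : nn (1 : Matrix (Fin 2) (Fin 2) ℂ) = 2 := by
  rw [nn_expand]; norm_num [Matrix.one_apply]

lemma nn_neg (M : Matrix (Fin 2) (Fin 2) ℂ) : nn (-M) = nn M := by
  simp [nn_expand]

lemma nn_sub_le (M N : Matrix (Fin 2) (Fin 2) ℂ) : nn (M - N) ≤ nn M + nn N := by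
  rw [sub_eq_add_neg]
  calc nn (M + -N) ≤ nn M + nn (-N) := nn_add_le _ _
  _ = nn M + nn N := by rw [nn_neg]

lemma nn_inv_sub_one (A : SL2C) :
    nn ((↑(A⁻¹) : Matrix (Fin 2) (Fin 2) ℂ) - 1) = nn ((↑A : Matrix (Fin 2) (Fin 2) ℂ) - 1) := by
  rw [Matrix.SpecialLinearGroup.coe_inv, Matrix.adjugate_fin_two]
  rw [nn_expand, nn_expand]
  simp [Matrix.sub_apply, Matrix.one_apply]
  ring

lemma coe_mul_inv (A : SL2C) :
    (A : Matrix (Fin 2) (Fin 2) ℂ) * (↑(A⁻¹) : Matrix (Fin 2) (Fin 2) ℂ) = 1 := by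
  rw [← Matrix.SpecialLinearGroup.coe_mul, mul_inv_cancel]
  exact Matrix.SpecialLinearGroup.coe_one

/-! ### The key commutator contraction estimate -/

lemma key_est (A B : SL2C) (hA : nn ((↑A : Matrix (Fin 2) (Fin 2) ℂ) - 1) ≤ 1/20)
    (hB : nn ((↑B : Matrix (Fin 2) (Fin 2) ℂ) - 1) ≤ 1/20) :
    nn ((↑(A*B*A⁻¹*B⁻¹) : Matrix (Fin 2) (Fin 2) ℂ) - 1) ≤
      (1/2) * min (nn ((↑A : Matrix (Fin 2) (Fin 2) ℂ) - 1))
        (nn ((↑B : Matrix (Fin 2) (Fin 2) ℂ) - 1)) := by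
  set Am := (↑A : Matrix (Fin 2) (Fin 2) ℂ) with hAm
  set Bm := (↑B : Matrix (Fin 2) (Fin 2) ℂ) with hBm
  set X := Am - 1 with hX
  set Y := Bm - 1 with hY
  set A' := (↑(A⁻¹) : Matrix (Fin 2) (Fin 2) ℂ) with hA'
  set B' := (↑(B⁻¹) : Matrix (Fin 2) (Fin 2) ℂ) with hB'
  have hAA' : Am * A' = 1 := coe_mul_inv A
  have hBB' : Bm * B' = 1 := coe_mul_inv B
  have hid : (↑(A*B*A⁻¹*B⁻¹) : Matrix (Fin 2) (Fin 2) ℂ) - 1 = (X*Y - Y*X) * (A' * B') := by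
    simp only [Matrix.SpecialLinearGroup.coe_mul, ← hAm, ← hBm, ← hA', ← hB']
    have h1 : (X*Y - Y*X) = Am*Bm - Bm*Am := by rw [hX, hY]; noncomm_ring
    calc Am*Bm*A'*B' - 1
        = (Am*Bm - Bm*Am) * (A' * B') + (Bm*(Am*A')*B' - 1) := by noncomm_ring
      _ = (Am*Bm - Bm*Am) * (A' * B') + (Bm*B' - 1) := by rw [hAA', mul_one]
      _ = (Am*Bm - Bm*Am) * (A' * B') := by rw [hBB']; abel
      _ = (X*Y - Y*X) * (A' * B') := by rw [h1]
  rw [hid]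
  have hA'1 : nn (A' - 1) = nn X := nn_inv_sub_one A
  have hB'1 : nn (B' - 1) = nn Y := nn_inv_sub_one B
  have hnA' : nn A' ≤ 2 + 1/20 := by
    calc nn A' = nn ((A' - 1) + 1) := by congr 1; abel
    _ ≤ nn (A' - 1) + nn 1 := nn_add_le _ _
    _ ≤ 2 + 1/20 := by rw [hA'1, nn_one]; linarith
  have hnB' : nn B' ≤ 2 + 1/20 := by
    calc nn B' = nn ((B' - 1) + 1) := by congr 1; abel
    _ ≤ nn (B' - 1) + nn 1 := nn_add_le _ _
    _ ≤ 2 + 1/20 := by rw [hB'1, nn_one]; linarith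
  have hXn := nn_nonneg X; have hYn := nn_nonneg Y
  have hApos := nn_nonneg A'; have hBpos := nn_nonneg B'
  have h1 : nn ((X*Y - Y*X) * (A' * B')) ≤ (nn X * nn Y + nn Y * nn X) * (nn A' * nn B') := by
    have h3 := nn_mul_le X Y
    have h4 := nn_mul_le Y X
    have h5 := nn_mul_le A' B'
    have h6 := nn_nonneg (A'*B')
    calc nn ((X*Y - Y*X) * (A' * B')) ≤ nn (X*Y - Y*X) * nn (A' * B') := nn_mul_le _ _
    _ ≤ (nn (X*Y) + nn (Y*X)) * nn (A'*B') := by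
        have := nn_sub_le (X*Y) (Y*X); nlinarith [nn_nonneg (X*Y - Y*X)]
    _ ≤ (nn X * nn Y + nn Y * nn X) * (nn A' * nn B') := by
        apply mul_le_mul (by linarith) h5 h6 (by nlinarith)
  refine le_trans h1 ?_
  have hP : nn A' * nn B' ≤ (2+1/20)*(2+1/20) := mul_le_mul hnA' hnB' hBpos (by norm_num)
  have hPn : 0 ≤ nn A' * nn B' := mul_nonneg hApos hBpos
  rcases le_total (nn X) (nn Y) with h | h
  · rw [min_eq_left h]
    have t1 : nn X * nn Y ≤ nn X * (1/20) := mul_le_mul_of_nonneg_left hB hXn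
    have t2 : (nn X * nn Y + nn Y * nn X) * (nn A' * nn B') ≤
        (nn X * (1/20) + nn X * (1/20)) * ((2+1/20)*(2+1/20)) := by
      apply mul_le_mul (by nlinarith) hP hPn (by nlinarith)
    nlinarith
  · rw [min_eq_right h]
    have t1 : nn Y * nn X ≤ nn Y * (1/20) := mul_le_mul_of_nonneg_left hA hYn
    have t2 : (nn X * nn Y + nn Y * nn X) * (nn A' * nn B') ≤
        (nn Y * (1/20) + nn Y * (1/20)) * ((2+1/20)*(2+1/20)) := by
      apply mul_le_mul (by nlinarith) hP hPn (by nlinarith)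
    nlinarith

/-! ### Centralizers of non-scalar 2×2 matrices are abelian -/

lemma centralizer_combo (D X : Matrix (Fin 2) (Fin 2) ℂ)
    (hD : ¬ (D 0 1 = 0 ∧ D 1 0 = 0 ∧ D 0 0 = D 1 1))
    (hX : X * D = D * X) : ∃ a b : ℂ, X = a • 1 + b • D := by
  have e := fun i j => congrFun (congrFun hX i) j
  simp only [Matrix.mul_apply, Fin.sum_univ_two] at e
  have e00 := e 0 0; have e01 := e 0 1; have e10 := e 1 0; have e11 := e 1 1
  by_cases h01 : D 0 1 ≠ 0
  · refine ⟨X 0 0 - (X 0 1 / D 0 1) * D 0 0, X 0 1 / D 0 1, ?_⟩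
    ext i j
    fin_cases i <;> fin_cases j <;>
      simp only [Matrix.add_apply, Matrix.smul_apply, Matrix.one_apply, smul_eq_mul] <;>
      norm_num <;> field_simp
    all_goals first
      | linear_combination e00 | linear_combination -e00
      | linear_combination e01 | linear_combination -e01
      | linear_combination e10 | linear_combination -e10
      | linear_combination e11 | linear_combination -e11
      | linear_combination e00 - e01 | linear_combination -e00 - e01
      | linear_combination e00 + e01 | linear_combination e01 - e00
      | linear_combination e00 + e10 | linear_combination -e00 - e10
      | linear_combination e00 - e10 | linear_combination e10 - e00
  by_cases h10 : D 1 0 ≠ 0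
  · refine ⟨X 0 0 - (X 1 0 / D 1 0) * D 0 0, X 1 0 / D 1 0, ?_⟩
    ext i j
    fin_cases i <;> fin_cases j <;>
      simp only [Matrix.add_apply, Matrix.smul_apply, Matrix.one_apply, smul_eq_mul] <;>
      norm_num <;> field_simp
    all_goals first
      | linear_combination e00 | linear_combination -e00
      | linear_combination e01 | linear_combination -e01
      | linear_combination e10 | linear_combination -e10
      | linear_combination e11 | linear_combination -e11
      | linear_combination e00 - e01 | linear_combination -e00 - e01
      | linear_combination e00 + e01 | linear_combination e01 - e00
      | linear_combination e00 + e10 | linear_combination -e00 - e10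
      | linear_combination e00 - e10 | linear_combination e10 - e00
  · push_neg at h01 h10 hD
    have hdd := hD h01 h10
    have hX01 : X 0 1 = 0 := by
      have := e01; rw [h01] at this
      have h2 : X 0 1 * (D 1 1 - D 0 0) = 0 := by linear_combination this
      rcases mul_eq_zero.mp h2 with h | h
      · exact h
      · exact absurd (by linear_combination -h) hdd
    have hX10 : X 1 0 = 0 := by
      have := e10; rw [h10] at this
      have h2 : X 1 0 * (D 0 0 - D 1 1) = 0 := by linear_combination this
      rcases mul_eq_zero.mp h2 with h | h
      · exact h
      · exact absurd (by linear_combination h) hdd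
    refine ⟨X 0 0 - ((X 0 0 - X 1 1) / (D 0 0 - D 1 1)) * D 0 0,
            (X 0 0 - X 1 1) / (D 0 0 - D 1 1), ?_⟩
    have hne : D 0 0 - D 1 1 ≠ 0 := sub_ne_zero.mpr hdd
    ext i j
    fin_cases i <;> fin_cases j <;>
      simp only [Matrix.add_apply, Matrix.smul_apply, Matrix.one_apply, smul_eq_mul] <;>
      norm_num [hX01, hX10, h01, h10] <;> field_simp <;> ring

lemma centralizer_comm (D X Y : Matrix (Fin 2) (Fin 2) ℂ)
    (hD : ¬ (D 0 1 = 0 ∧ D 1 0 = 0 ∧ D 0 0 = D 1 1))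
    (hX : X * D = D * X) (hY : Y * D = D * Y) : X * Y = Y * X := by
  obtain ⟨a, b, rfl⟩ := centralizer_combo D X hD hX
  obtain ⟨c, d, rfl⟩ := centralizer_combo D Y hD hY
  simp only [add_mul, mul_add, smul_mul_assoc, mul_smul_comm, one_mul, mul_one, smul_smul,
    smul_add]
  match_scalars <;> ring

/-! ### Center and quotient plumbing -/

def negOne : SL2C := ⟨-1, by simp [Matrix.det_neg]⟩

lemma coe_negOne : (negOne : Matrix (Fin 2) (Fin 2) ℂ) = -1 := rfl

lemma negOne_mem_center : negOne ∈ Subgroup.center SL2C := by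
  rw [Subgroup.mem_center_iff]
  intro g
  ext i j
  rw [Matrix.SpecialLinearGroup.coe_mul, Matrix.SpecialLinearGroup.coe_mul, coe_negOne]
  simp

lemma center_cases {z : SL2C} (hz : z ∈ Subgroup.center SL2C) : z = 1 ∨ z = negOne := by
  obtain ⟨r, hr, hrz⟩ := Matrix.SpecialLinearGroup.mem_center_iff.mp hz
  simp only [Fintype.card_fin] at hr
  have : (r - 1) * (r + 1) = 0 := by linear_combination hr
  rcases mul_eq_zero.mp this with h | h
  · left
    have hr1 : r = 1 := by linear_combination h
    ext i j
    rw [← hrz, hr1]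
    simp [Matrix.scalar, Matrix.one_apply, Matrix.diagonal]
  · right
    have hr1 : r = -1 := by linear_combination h
    ext i j
    rw [← hrz, hr1, coe_negOne]
    simp only [Matrix.scalar_apply, Matrix.diagonal_apply, Matrix.neg_apply, Matrix.one_apply]
    split <;> simp

noncomputable def q : SL2C →* PSL2C := QuotientGroup.mk' (Subgroup.center SL2C)

lemma q_eq_iff {A B : SL2C} : q A = q B ↔ A⁻¹ * B ∈ Subgroup.center SL2C :=
  QuotientGroup.eq

lemma q_eq_one_iff {A : SL2C} : q A = 1 ↔ A ∈ Subgroup.center SL2C :=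
  QuotientGroup.eq_one_iff A

lemma cont_coe : Continuous (fun A : SL2C => (A : Matrix (Fin 2) (Fin 2) ℂ)) :=
  continuous_induced_dom

lemma cont_nn_sub (C : Matrix (Fin 2) (Fin 2) ℂ) :
    Continuous (fun A : SL2C => nn ((A : Matrix (Fin 2) (Fin 2) ℂ) - C)) := by
  unfold nn
  apply continuous_finset_sum
  intro i _
  apply continuous_finset_sum
  intro j _
  exact ((cont_coe.matrix_elem i j).sub continuous_const).norm

lemma isOpen_V (C : Matrix (Fin 2) (Fin 2) ℂ) (e : ℝ) :
    IsOpen {A : SL2C | nn ((A : Matrix (Fin 2) (Fin 2) ℂ) - C) < e} :=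
  isOpen_lt (cont_nn_sub C) continuous_const

lemma isOpen_q_image (W : Set SL2C) (hW : IsOpen W)
    (hsat : ∀ A B : SL2C, A⁻¹ * B ∈ Subgroup.center SL2C → A ∈ W → B ∈ W) :
    IsOpen (q '' W) := by
  have key : q ⁻¹' (q '' W) = W := by
    ext B
    constructor
    · rintro ⟨A, hA, hAB⟩
      exact hsat A B (QuotientGroup.eq.mp hAB) hA
    · intro h; exact ⟨B, h, rfl⟩
  have h2 : IsOpen (⇑q ⁻¹' (⇑q '' W)) := by rwa [key]
  exact isOpen_coinduced.mpr h2

lemma tendsto_q_one (x : ℕ → SL2C) (h : ∀ i j : Fin 2, Filter.Tendsto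
      (fun k => ((x k : Matrix (Fin 2) (Fin 2) ℂ)) i j) atTop
      (𝓝 ((1 : Matrix (Fin 2) (Fin 2) ℂ) i j))) :
    Filter.Tendsto (fun k => q (x k)) atTop (𝓝 (1 : PSL2C)) := by
  have h1 : Filter.Tendsto (fun k => ((x k : Matrix (Fin 2) (Fin 2) ℂ))) atTop
      (𝓝 (1 : Matrix (Fin 2) (Fin 2) ℂ)) := by
    exact tendsto_pi_nhds.mpr fun i => tendsto_pi_nhds.mpr fun j => h i j
  have h2 : Filter.Tendsto x atTop (𝓝 (1 : SL2C)) := by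
    rw [nhds_induced (fun A : SL2C => (A : Matrix (Fin 2) (Fin 2) ℂ)) 1, Filter.tendsto_comap_iff]
    exact h1
  have qc : Continuous q := continuous_quotient_mk'
  have h3 := (qc.tendsto (1 : SL2C)).comp h2
  rw [map_one] at h3
  exact h3

/-- If two small elements of `SL(2,ℂ)` commute in `PSL(2,ℂ)`, they commute as matrices. -/
lemma comm_lift (X Y : SL2C) (hX : nn ((↑X : Matrix (Fin 2) (Fin 2) ℂ) - 1) ≤ 1/20)
    (hY : nn ((↑Y : Matrix (Fin 2) (Fin 2) ℂ) - 1) ≤ 1/20)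
    (h : q X * q Y = q Y * q X) :
    (X : Matrix (Fin 2) (Fin 2) ℂ) * (Y : Matrix (Fin 2) (Fin 2) ℂ) =
      (Y : Matrix (Fin 2) (Fin 2) ℂ) * (X : Matrix (Fin 2) (Fin 2) ℂ) := by
  have hq : q (X*Y*X⁻¹*Y⁻¹) = 1 := by
    have : q (X*Y*X⁻¹*Y⁻¹) = q X * q Y * (q X)⁻¹ * (q Y)⁻¹ := by
      simp [map_mul, map_inv]
    rw [this]
    rw [show q X * q Y = q Y * q X from h]
    group
  have hmem : X*Y*X⁻¹*Y⁻¹ ∈ Subgroup.center SL2C := q_eq_one_iff.mp hq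
  rcases center_cases hmem with h1 | h1
  · have : X * Y = Y * X := by
      have := h1
      group at this ⊢
      -- from X*Y*X⁻¹*Y⁻¹ = 1
      calc X * Y = (X*Y*X⁻¹*Y⁻¹) * (Y * X) := by group
      _ = 1 * (Y * X) := by rw [h1]
      _ = Y * X := one_mul _
    calc (X : Matrix (Fin 2) (Fin 2) ℂ) * (Y : Matrix (Fin 2) (Fin 2) ℂ)
        = ((X * Y : SL2C) : Matrix (Fin 2) (Fin 2) ℂ) :=
          (Matrix.SpecialLinearGroup.coe_mul _ _).symm
    _ = ((Y * X : SL2C) : Matrix (Fin 2) (Fin 2) ℂ) := by rw [this]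
    _ = (Y : Matrix (Fin 2) (Fin 2) ℂ) * (X : Matrix (Fin 2) (Fin 2) ℂ) :=
          Matrix.SpecialLinearGroup.coe_mul _ _
  · exfalso
    have hest := key_est X Y hX hY
    rw [h1] at hest
    have h4 : nn ((negOne : Matrix (Fin 2) (Fin 2) ℂ) - 1) = 4 := by
      rw [coe_negOne, nn_expand]
      simp [Matrix.sub_apply, Matrix.neg_apply, Matrix.one_apply]
      norm_num
    rw [h4] at hest
    have h5 : min (nn ((↑X : Matrix (Fin 2) (Fin 2) ℂ) - 1))
        (nn ((↑Y : Matrix (Fin 2) (Fin 2) ℂ) - 1)) ≤ 1/20 := le_trans (min_le_left _ _) hX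
    linarith

/-- A small commutator which is nontrivial in `PSL(2,ℂ)` gives a non-scalar matrix. -/
lemma nonscalar_of_q_ne_one (C : SL2C) (h : q C ≠ 1) :
    ¬ ((↑C : Matrix (Fin 2) (Fin 2) ℂ) 0 1 = 0 ∧ (↑C : Matrix (Fin 2) (Fin 2) ℂ) 1 0 = 0 ∧
       (↑C : Matrix (Fin 2) (Fin 2) ℂ) 0 0 = (↑C : Matrix (Fin 2) (Fin 2) ℂ) 1 1) := by
  rintro ⟨h01, h10, hdiag⟩
  apply h
  rw [q_eq_one_iff]
  set r := (↑C : Matrix (Fin 2) (Fin 2) ℂ) 0 0 with hr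
  have hdet : r * r = 1 := by
    have := C.2
    rw [Matrix.det_fin_two] at this
    rw [hr]
    rw [h01, h10, ← hdiag] at this
    linear_combination this
  rw [Subgroup.mem_center_iff]
  intro g
  ext i j
  have hCscalar : ∀ i j : Fin 2, (↑C : Matrix (Fin 2) (Fin 2) ℂ) i j = if i = j then r else 0 := by
    intro i j
    fin_cases i <;> fin_cases j <;> simp [h01, h10, ← hdiag, hr]
  simp only [Matrix.SpecialLinearGroup.coe_mul, Matrix.mul_apply, Fin.sum_univ_two]
  fin_cases i <;> fin_cases j <;>
    simp [hCscalar 0 0, hCscalar 0 1, hCscalar 1 0, hCscalar 1 1] <;> ring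

/-! ### The main theorem -/

/-- Zassenhaus: There is a neighborhood `U` of the identity in `PSL(2,ℂ)`
such that every subgroup generated by elements of `U` which is discrete is nilpotent;
consequently, a subgroup generated by elements of `U` which is not nilpotent is not
discrete. -/
theorem zassenhaus_psl2c :
    ∃ U : Set PSL2C, U ∈ 𝓝 (1 : PSL2C) ∧
      (∀ S : Set PSL2C, S ⊆ U →
        (DiscreteTopology ↥(Subgroup.closure S) → Group.IsNilpotent ↥(Subgroup.closure S)) ∧
        (¬ Group.IsNilpotent ↥(Subgroup.closure S) →
          ¬ DiscreteTopology ↥(Subgroup.closure S))) := by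
  classical
  set V : Set SL2C := {A : SL2C | nn ((A : Matrix (Fin 2) (Fin 2) ℂ) - 1) < 1/20} with hV
  set V' : Set SL2C := {A : SL2C | nn ((A : Matrix (Fin 2) (Fin 2) ℂ) - (-1)) < 1/20} with hV'
  set W : Set SL2C := V ∪ V' with hW
  have hWopen : IsOpen W := (isOpen_V 1 (1/20)).union (isOpen_V (-1) (1/20))
  have hWsat : ∀ A B : SL2C, A⁻¹ * B ∈ Subgroup.center SL2C → A ∈ W → B ∈ W := by
    intro A B hz hA
    rcases center_cases hz with h | h
    · have hBA : B = A := by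
        have := congrArg (fun x => A * x) h
        simpa [mul_assoc] using this
      rwa [hBA]
    · have hBA : B = A * negOne := by
        have := congrArg (fun x => A * x) h
        simpa [mul_assoc] using this
      have hcoe : (↑B : Matrix (Fin 2) (Fin 2) ℂ) = -(↑A) := by
        rw [hBA, Matrix.SpecialLinearGroup.coe_mul, coe_negOne, mul_neg_one]
      rcases hA with hA | hA
      · right
        show nn ((↑B : Matrix (Fin 2) (Fin 2) ℂ) - (-1)) < 1/20
        rw [hcoe]
        have : -(↑A : Matrix (Fin 2) (Fin 2) ℂ) - (-1) = -((↑A : Matrix (Fin 2) (Fin 2) ℂ) - 1) := by abel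
        rw [this, nn_neg]
        exact hA
      · left
        show nn ((↑B : Matrix (Fin 2) (Fin 2) ℂ) - 1) < 1/20
        rw [hcoe]
        have : -(↑A : Matrix (Fin 2) (Fin 2) ℂ) - 1 = -((↑A : Matrix (Fin 2) (Fin 2) ℂ) - (-1)) := by abel
        rw [this, nn_neg]
        exact hA
  have hUopen : IsOpen (q '' W) := isOpen_q_image W hWopen hWsat
  have h1U : (1 : PSL2C) ∈ q '' W := by
    refine ⟨1, Or.inl ?_, map_one q⟩
    show nn ((↑(1:SL2C) : Matrix (Fin 2) (Fin 2) ℂ) - 1) < 1/20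
    rw [Matrix.SpecialLinearGroup.coe_one, sub_self]
    have : nn (0 : Matrix (Fin 2) (Fin 2) ℂ) = 0 := by simp [nn_expand]
    rw [this]; norm_num
  refine ⟨q '' W, hUopen.mem_nhds h1U, ?_⟩
  intro S hS
  set Γ := Subgroup.closure S with hΓ
  -- lifting elements of `q '' W` to small matrices
  have hlift : ∀ a ∈ q '' W, ∃ A : SL2C, q A = a ∧ nn ((↑A : Matrix (Fin 2) (Fin 2) ℂ) - 1) < 1/20 := by
    rintro a ⟨B, hBW, rfl⟩
    rcases hBW with hB | hB
    · exact ⟨B, rfl, hB⟩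
    · refine ⟨B * negOne, ?_, ?_⟩
      · rw [map_mul, q_eq_one_iff.mpr negOne_mem_center, mul_one]
      · rw [Matrix.SpecialLinearGroup.coe_mul, coe_negOne, mul_neg_one]
        have : -(↑B : Matrix (Fin 2) (Fin 2) ℂ) - 1 = -((↑B : Matrix (Fin 2) (Fin 2) ℂ) - (-1)) := by abel
        rw [this, nn_neg]
        exact hB
  -- main claim: discrete implies generators commute
  have main : DiscreteTopology ↥Γ → ∀ x y : ↥Γ, x * y = y * x := by
    intro hdisc
    -- isolate the identity
    have hopen1 : IsOpen ({1} : Set ↥Γ) := isOpen_discrete _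
    obtain ⟨O, hOopen, hOpre⟩ := isOpen_induced_iff.mp hopen1
    have h1O : (1 : PSL2C) ∈ O := by
      have : (1 : ↥Γ) ∈ Subtype.val ⁻¹' O := by rw [hOpre]; rfl
      exact this
    -- the commuting claim for generators
    have hgen : ∀ a ∈ S, ∀ b ∈ S, a * b = b * a := by
      intro a ha b hb
      by_contra hne
      obtain ⟨A, hqA, hA⟩ := hlift a (hS ha)
      obtain ⟨B, hqB, hB⟩ := hlift b (hS hb)
      -- the predicate for the descent
      set Pred : SL2C × SL2C → Prop := fun p =>
        nn ((↑p.1 : Matrix (Fin 2) (Fin 2) ℂ) - 1) < 1/20 ∧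
        nn ((↑p.2 : Matrix (Fin 2) (Fin 2) ℂ) - 1) < 1/20 ∧
        q p.1 ∈ Γ ∧ q p.2 ∈ Γ ∧ q p.1 * q p.2 ≠ q p.2 * q p.1 with hPred
      set mval : SL2C × SL2C → ℝ := fun p =>
        min (nn ((↑p.1 : Matrix (Fin 2) (Fin 2) ℂ) - 1))
          (nn ((↑p.2 : Matrix (Fin 2) (Fin 2) ℂ) - 1)) with hmval
      have hmval_nonneg : ∀ p, 0 ≤ mval p := fun p => le_min (nn_nonneg _) (nn_nonneg _)
      have hmval_lt : ∀ p, Pred p → mval p < 1/20 := by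
        intro p hp
        exact lt_of_le_of_lt (min_le_left _ _) hp.1
      -- descent step
      have descent : ∀ p : SL2C × SL2C, Pred p →
          ∃ p', Pred p' ∧ mval p' ≤ (1/2) * mval p ∧
            (q (p'.1 * p'.2 * p'.1⁻¹ * p'.2⁻¹) ≠ 1) := by
        intro p hp
        obtain ⟨h1, h2, hm1, hm2, hnc⟩ := hp
        set C := p.1 * p.2 * p.1⁻¹ * p.2⁻¹ with hC
        have hCest : nn ((↑C : Matrix (Fin 2) (Fin 2) ℂ) - 1) ≤ (1/2) * mval p :=
          key_est p.1 p.2 (le_of_lt h1) (le_of_lt h2)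
        have hCsmall : nn ((↑C : Matrix (Fin 2) (Fin 2) ℂ) - 1) < 1/20 := by
          have := hmval_lt p ⟨h1, h2, hm1, hm2, hnc⟩
          have := hmval_nonneg p
          linarith
        have hqC : q C = q p.1 * q p.2 * (q p.1)⁻¹ * (q p.2)⁻¹ := by
          simp [hC, map_mul, map_inv]
        have hqCne : q C ≠ 1 := by
          intro h
          apply hnc
          rw [hqC] at h
          have : ⁅q p.1, q p.2⁆ = 1 := by rwa [commutatorElement_def]
          exact (commutatorElement_eq_one_iff_mul_comm.mp this)
        have hqCΓ : q C ∈ Γ := by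
          rw [hqC]
          exact mul_mem (mul_mem (mul_mem hm1 hm2) (inv_mem hm1)) (inv_mem hm2)
        by_cases hca : q C * q p.1 = q p.1 * q C
        · by_cases hcb : q C * q p.2 = q p.2 * q C
          · -- both commute: contradiction via abelian centralizer
            exfalso
            have hMca := comm_lift C p.1 (le_of_lt hCsmall) (le_of_lt h1) hca
            have hMcb := comm_lift C p.2 (le_of_lt hCsmall) (le_of_lt h2) hcb
            have hns := nonscalar_of_q_ne_one C hqCne
            have := centralizer_comm (↑C) (↑p.1) (↑p.2) hns hMca.symm hMcb.symm
            apply hnc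
            have hPQ : p.1 * p.2 = p.2 * p.1 := by
              apply Subtype.ext
              rw [Matrix.SpecialLinearGroup.coe_mul, Matrix.SpecialLinearGroup.coe_mul]
              exact this
            rw [← map_mul, ← map_mul, hPQ]
          · -- (C, p.2) is a new noncommuting pair
            refine ⟨(C, p.2), ⟨hCsmall, h2, hqCΓ, hm2, hcb⟩, ?_, ?_⟩
            · calc mval (C, p.2) ≤ nn ((↑C : Matrix (Fin 2) (Fin 2) ℂ) - 1) := min_le_left _ _
              _ ≤ (1/2) * mval p := hCest
            · intro h
              apply hcb
              have : ⁅q C, q p.2⁆ = 1 := by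
                rw [commutatorElement_def]
                simpa [map_mul, map_inv] using h
              exact commutatorElement_eq_one_iff_mul_comm.mp this
        · refine ⟨(C, p.1), ⟨hCsmall, h1, hqCΓ, hm1, hca⟩, ?_, ?_⟩
          · calc mval (C, p.1) ≤ nn ((↑C : Matrix (Fin 2) (Fin 2) ℂ) - 1) := min_le_left _ _
            _ ≤ (1/2) * mval p := hCest
          · intro h
            apply hca
            have : ⁅q C, q p.1⁆ = 1 := by
              rw [commutatorElement_def]
              simpa [map_mul, map_inv] using h
            exact commutatorElement_eq_one_iff_mul_comm.mp this
      -- build the descending sequence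
      have hP0 : Pred (A, B) := by
        refine ⟨hA, hB, ?_, ?_, ?_⟩
        · rw [hqA]; exact Subgroup.subset_closure ha
        · rw [hqB]; exact Subgroup.subset_closure hb
        · rw [hqA, hqB]; exact hne
      choose F hF1 hF2 hF3 using descent
      let g : ℕ → {p : SL2C × SL2C // Pred p} := fun n =>
        Nat.rec ⟨(A, B), hP0⟩ (fun _ ih => ⟨F ih.1 ih.2, hF1 ih.1 ih.2⟩) n
      have hgsucc : ∀ n, (g (n+1)).1 = F (g n).1 (g n).2 := fun n => rfl
      have hgbound : ∀ n, mval (g n).1 ≤ (1/2)^n * (1/20) := by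
        intro n
        induction n with
        | zero =>
          show mval (A, B) ≤ (1/2)^0 * (1/20)
          rw [pow_zero, one_mul]
          exact le_of_lt (hmval_lt _ hP0)
        | succ n ih =>
          have := hF2 (g n).1 (g n).2
          rw [← hgsucc n] at this
          calc mval (g (n+1)).1 ≤ (1/2) * mval (g n).1 := this
          _ ≤ (1/2) * ((1/2)^n * (1/20)) := by linarith [hmval_nonneg (g n).1]
          _ = (1/2)^(n+1) * (1/20) := by ring
      -- the sequence of nontrivial commutators
      set c : ℕ → SL2C := fun n => (g n).1.1 * (g n).1.2 * (g n).1.1⁻¹ * (g n).1.2⁻¹ with hc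
      have hcne : ∀ n, q (c n) ≠ 1 := by
        intro n
        have h := (g n).2
        intro hq1
        apply h.2.2.2.2
        have : ⁅q (g n).1.1, q (g n).1.2⁆ = 1 := by
          rw [commutatorElement_def]
          simpa [hc, map_mul, map_inv] using hq1
        exact commutatorElement_eq_one_iff_mul_comm.mp this
      have hcΓ : ∀ n, q (c n) ∈ Γ := by
        intro n
        have h := (g n).2
        simp only [hc, map_mul, map_inv]
        exact mul_mem (mul_mem (mul_mem h.2.2.1 h.2.2.2.1) (inv_mem h.2.2.1))
          (inv_mem h.2.2.2.1)
      have hcsmall : ∀ n, nn ((↑(c n) : Matrix (Fin 2) (Fin 2) ℂ) - 1) ≤ (1/2)^n * (1/20) := by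
        intro n
        have h := (g n).2
        have := key_est (g n).1.1 (g n).1.2 (le_of_lt h.1) (le_of_lt h.2.1)
        calc nn ((↑(c n) : Matrix (Fin 2) (Fin 2) ℂ) - 1) ≤ (1/2) * mval (g n).1 := this
        _ ≤ (1/2) * ((1/2)^n * (1/20)) := by linarith [hgbound n, hmval_nonneg (g n).1]
        _ ≤ (1/2)^n * (1/20) := by
            have : (0:ℝ) ≤ (1/2)^n * (1/20) := by positivity
            linarith
      -- tendsto 1 and contradiction with discreteness
      have htend : Filter.Tendsto (fun k => q (c k)) atTop (𝓝 (1 : PSL2C)) := by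
        apply tendsto_q_one
        intro i j
        rw [← tendsto_sub_nhds_zero_iff]
        have hgeo : Filter.Tendsto (fun k : ℕ => (1/2:ℝ)^k * (1/20)) atTop (𝓝 0) := by
          have := tendsto_pow_atTop_nhds_zero_of_lt_one (by norm_num : (0:ℝ) ≤ 1/2)
            (by norm_num : (1/2:ℝ) < 1)
          have h2 := this.mul_const (1/20 : ℝ)
          simpa using h2
        refine squeeze_zero_norm (fun k => ?_) hgeo
        have h1 : ((↑(c k) : Matrix (Fin 2) (Fin 2) ℂ) i j - (1 : Matrix (Fin 2) (Fin 2) ℂ) i j)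
            = ((↑(c k) : Matrix (Fin 2) (Fin 2) ℂ) - 1) i j := by
          simp [Matrix.sub_apply]
        rw [h1]
        exact le_trans (entry_le_nn _ i j) (hcsmall k)
      have hev : ∀ᶠ k in atTop, q (c k) ∈ O := htend.eventually (hOopen.mem_nhds h1O)
      obtain ⟨k, hk⟩ := hev.exists
      have : (⟨q (c k), hcΓ k⟩ : ↥Γ) ∈ Subtype.val ⁻¹' O := hk
      rw [hOpre] at this
      exact hcne k (congrArg Subtype.val this)
    -- from generators commuting to the whole closure commuting
    have claim1 : ∀ b ∈ S, ∀ x ∈ Γ, Commute x b := by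
      intro b hb x hx
      refine Subgroup.closure_induction (fun y hy => hgen y hy b hb) (Commute.one_left b)
        (fun y z _ _ hy hz => Commute.mul_left hy hz) (fun y _ hy => Commute.inv_left hy) hx
    have claim2 : ∀ x ∈ Γ, ∀ y ∈ Γ, Commute x y := by
      intro x hx y hy
      refine Subgroup.closure_induction (fun z hz => claim1 z hz x hx) (Commute.one_right x)
        (fun y z _ _ hy hz => Commute.mul_right hy hz) (fun y _ hy => Commute.inv_right hy) hy
    intro x y
    exact Subtype.ext (claim2 x.1 x.2 y.1 y.2)
  constructor
  · intro hdisc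
    have hcomm := main hdisc
    letI : CommGroup ↥Γ := { (inferInstance : Group ↥Γ) with mul_comm := hcomm }
    exact CommGroup.isNilpotent
  · intro hnotnil hdisc
    apply hnotnil
    have hcomm := main hdisc
    letI : CommGroup ↥Γ := { (inferInstance : Group ↥Γ) with mul_comm := hcomm }
    exact CommGroup.isNilpotent
end

section
/- Let f(z) = λz on the unit disc 𝔻 with 0 < |λ| < 1, and let g be an injective holomorphic map on 𝔻 close to the identity. Define the commutator sequence g_0 = g, g_{k+1} = f^{−N} ∘ (f ∘ g_k ∘ f^{−1} ∘ g_k^{−1}) ∘ f^N. There exist ε0 > 0 and, given |λ − 1| ≤ ε0 and sup_{𝔻}|g(z) − z| ≤ ε0, an integer N ≥ 1 such that each g_k is defined at least on 𝔻_{1/3} and g_k → id uniformly on 𝔻_{1/3} as k → ∞. -/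
open Metric Filter Topology

lemma LR.lip {h : ℂ → ℂ} {δ : ℝ}
    (hd : DifferentiableOn ℂ h (ball (0:ℂ) (2/3)))
    (hb : ∀ z ∈ ball (0:ℂ) (2/3), ‖h z - z‖ ≤ δ) :
    ∀ x ∈ closedBall (0:ℂ) (2/5), ∀ y ∈ closedBall (0:ℂ) (2/5),
      ‖(h x - x) - (h y - y)‖ ≤ 10 * δ * ‖x - y‖ := by
  intro x hx y hy
  set ε : ℂ → ℂ := fun z => h z - z with hε
  have hδ0 : 0 ≤ δ := le_trans (norm_nonneg _) (hb 0 (by simp only [mem_ball, dist_zero_right, norm_zero]; norm_num))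
  have hεd : DifferentiableOn ℂ ε (ball (0:ℂ) (2/3)) := hd.sub differentiableOn_id
  have hxn : ‖x‖ ≤ 2/5 := by simpa using hx
  have hyn : ‖y‖ ≤ 2/5 := by simpa using hy
  have hymem : y ∈ ball (0:ℂ) (2/3) := by simp only [mem_ball, dist_zero_right]; linarith
  have hFd : DifferentiableOn ℂ (dslope ε y) (ball (0:ℂ) (2/3)) :=
    (Complex.differentiableOn_dslope (isOpen_ball.mem_nhds hymem)).2 hεd
  have key : ‖dslope ε y x‖ ≤ 10 * δ := by
    refine Complex.norm_le_of_forall_mem_frontier_norm_le (U := ball (0:ℂ) (3/5))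
      isBounded_ball ?_ ?_ ?_
    · refine ⟨hFd.mono (ball_subset_ball (by norm_num)), ?_⟩
      refine (hFd.continuousOn).mono ?_
      rw [closure_ball (0:ℂ) (by norm_num : (3/5:ℝ) ≠ 0)]
      exact closedBall_subset_ball (by norm_num)
    · intro ζ hζ
      rw [frontier_ball (0:ℂ) (by norm_num : (3/5:ℝ) ≠ 0)] at hζ
      have hζn : ‖ζ‖ = 3/5 := by simpa using hζ
      have hne : ζ ≠ y := by
        intro hzy; rw [hzy] at hζn; linarith [hζn ▸ hyn]
      rw [dslope_of_ne ε hne, slope_def_module, smul_eq_mul, norm_mul, norm_inv]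
      have h1 : ‖ε ζ - ε y‖ ≤ 2 * δ := by
        have := hb ζ (by simp only [mem_ball, dist_zero_right]; rw [hζn]; norm_num)
        have := hb y hymem
        calc ‖ε ζ - ε y‖ ≤ ‖ε ζ‖ + ‖ε y‖ := norm_sub_le _ _
          _ ≤ 2 * δ := by simp only [hε]; linarith
      have h2 : (1/5 : ℝ) ≤ ‖ζ - y‖ := by
        have := norm_sub_norm_le ζ y
        linarith
      have h3 : (0:ℝ) < ‖ζ - y‖ := by linarith
      rw [inv_mul_le_iff₀ h3]
      calc ‖ε ζ - ε y‖ ≤ 2 * δ := h1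
        _ ≤ ‖ζ - y‖ * (10 * δ) := by nlinarith
    · rw [closure_ball (0:ℂ) (by norm_num : (3/5:ℝ) ≠ 0)]
      exact mem_closedBall_zero_iff.2 (by linarith)
  have := sub_smul_dslope ε y x
  have hno : ‖ε x - ε y‖ = ‖x - y‖ * ‖dslope ε y x‖ := by
    rw [← this, smul_eq_mul, norm_mul]
  calc ‖(h x - x) - (h y - y)‖ = ‖x - y‖ * ‖dslope ε y x‖ := hno
    _ ≤ ‖x - y‖ * (10 * δ) := by
        exact mul_le_mul_of_nonneg_left key (norm_nonneg _)
    _ = 10 * δ * ‖x - y‖ := by ring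


lemma LR.surj {h : ℂ → ℂ} {δ : ℝ} (hδ : δ ≤ 1/10000)
    (hd : DifferentiableOn ℂ h (ball (0:ℂ) (2/3)))
    (hb : ∀ z ∈ ball (0:ℂ) (2/3), ‖h z - z‖ ≤ δ)
    (c : ℂ) (hc : ‖c‖ ≤ 1/20) : ∃ w : ℂ, ‖w - c‖ ≤ 3*δ ∧ h w = c := by
  have hδ0 : 0 ≤ δ :=
    le_trans (norm_nonneg _) (hb 0 (by simp only [mem_ball, dist_zero_right, norm_zero]; norm_num))
  have hcball : c ∈ ball (0:ℂ) (2/3) := by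
    simp only [mem_ball, dist_zero_right]; linarith
  by_cases hfix : h c = c
  · exact ⟨c, by simp [hδ0], hfix⟩
  have hδpos : 0 < δ := by
    rcases eq_or_lt_of_le hδ0 with hz | hz
    · exfalso
      have := hb c hcball
      rw [← hz] at this
      exact hfix (by rwa [norm_le_zero_iff, sub_eq_zero] at this)
    · exact hz
  by_contra hno
  push_neg at hno
  have hsub : closedBall c (3*δ) ⊆ ball (0:ℂ) (2/3) := by
    intro w hw
    simp only [mem_closedBall, dist_eq_norm] at hw
    simp only [mem_ball, dist_zero_right]
    calc ‖w‖ = ‖(w - c) + c‖ := by ring_nf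
      _ ≤ ‖w - c‖ + ‖c‖ := norm_add_le _ _
      _ ≤ 3*δ + 1/20 := add_le_add hw hc
      _ < 2/3 := by linarith
  have hne : ∀ w ∈ closedBall c (3*δ), h w - c ≠ 0 := by
    intro w hw hzero
    simp only [mem_closedBall, dist_eq_norm] at hw
    exact hno w hw (by rwa [sub_eq_zero] at hzero)
  set φ : ℂ → ℂ := fun w => (h w - c)⁻¹ with hφ
  have hcl : closure (ball c (3*δ)) = closedBall c (3*δ) :=
    closure_ball c (by positivity)
  have hdiff : DiffContOnCl ℂ φ (ball c (3*δ)) := by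
    constructor
    · refine DifferentiableOn.inv ?_ ?_
      · exact ((hd.mono (ball_subset_closedBall.trans hsub)).sub (differentiableOn_const c))
      · exact fun w hw => hne w (ball_subset_closedBall hw)
    · rw [hcl]
      refine ContinuousOn.inv₀ ?_ hne
      exact ((hd.continuousOn.mono hsub).sub continuousOn_const)
  have hbdd : ∀ w ∈ frontier (ball c (3*δ)), ‖φ w‖ ≤ (2*δ)⁻¹ := by
    intro w hw
    rw [frontier_ball c (by positivity : (3*δ:ℝ) ≠ 0)] at hw
    have hwn : ‖w - c‖ = 3*δ := by
      simpa [dist_eq_norm] using hw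
    have h1 : 2*δ ≤ ‖h w - c‖ := by
      have hmemb : w ∈ ball (0:ℂ) (2/3) := hsub (by simp only [mem_closedBall, dist_eq_norm]; exact hwn.le)
      have := hb w hmemb
      calc 2*δ = 3*δ - δ := by ring
        _ ≤ ‖w - c‖ - ‖h w - w‖ := by rw [hwn]; linarith
        _ ≤ ‖(w - c) - (w - h w)‖ := by
            have := norm_sub_norm_le (w - c) (w - h w)
            have hrw : ‖w - h w‖ = ‖h w - w‖ := norm_sub_rev _ _
            linarith
        _ = ‖h w - c‖ := by ring_nf
    rw [hφ]
    simp only [norm_inv]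
    exact inv_anti₀ (by positivity) h1
  have hmax : ‖φ c‖ ≤ (2*δ)⁻¹ := by
    refine Complex.norm_le_of_forall_mem_frontier_norm_le isBounded_ball hdiff hbdd ?_
    rw [hcl]; exact mem_closedBall_self (by positivity)
  have hlow : δ⁻¹ ≤ ‖φ c‖ := by
    rw [hφ]
    simp only [norm_inv]
    have h2 : ‖h c - c‖ ≤ δ := hb c hcball
    have h3 : 0 < ‖h c - c‖ := by
      rw [norm_pos_iff, sub_ne_zero]; exact hfix
    exact inv_anti₀ h3 h2
  have : δ⁻¹ ≤ (2*δ)⁻¹ := hlow.trans hmax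
  have h4 : (2*δ)⁻¹ < δ⁻¹ := by
    apply inv_strictAnti₀ <;> linarith
  linarith

lemma LR.injOn {h : ℂ → ℂ} {δ : ℝ} (hδ : δ ≤ 1/10000)
    (hd : DifferentiableOn ℂ h (ball (0:ℂ) (2/3)))
    (hb : ∀ z ∈ ball (0:ℂ) (2/3), ‖h z - z‖ ≤ δ) :
    Set.InjOn h (closedBall (0:ℂ) (2/5)) := by
  intro x hx y hy hxy
  have hδ0 : 0 ≤ δ :=
    le_trans (norm_nonneg _) (hb 0 (by simp only [mem_ball, dist_zero_right, norm_zero]; norm_num))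
  have := LR.lip hd hb x hx y hy
  rw [hxy] at this
  have h2 : ‖x - y‖ ≤ 10 * δ * ‖x - y‖ := by
    have he : (h y - x) - (h y - y) = y - x := by ring
    rw [he, norm_sub_rev] at this
    exact this
  by_contra hne
  have h3 : 0 < ‖x - y‖ := by
    rw [norm_pos_iff, sub_ne_zero]; exact fun e => hne (e ▸ rfl)
  nlinarith

lemma LR.step {lam a : ℂ} {δ : ℝ}
    (hlam1 : ‖lam - 1‖ ≤ 1/10000)
    (ha1 : 1/25 < ‖a‖) (ha2 : ‖a‖ ≤ 1/24)
    {h : ℂ → ℂ}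
    (hd : DifferentiableOn ℂ h (ball (0:ℂ) (2/3)))
    (hδ : δ ≤ 1/10000)
    (hb : ∀ z ∈ ball (0:ℂ) (2/3), ‖h z - z‖ ≤ δ) :
    ∃ h1 : ℂ → ℂ,
      DifferentiableOn ℂ h1 (ball (0:ℂ) (2/3)) ∧
      (∀ z ∈ ball (0:ℂ) (2/3), ‖h1 z - z‖ ≤ δ/2) ∧
      ∀ z ∈ ball (0:ℂ) (1/3), ∃ w ∈ ball (0:ℂ) (1/3),
        lam⁻¹ * w ∈ ball (0:ℂ) (1/3) ∧ h w = a * z ∧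
        h1 z = a⁻¹ * (lam * h (lam⁻¹ * w)) := by
  have hδ0 : 0 ≤ δ :=
    le_trans (norm_nonneg _) (hb 0 (by simp only [mem_ball, dist_zero_right, norm_zero]; norm_num))
  have hlamn : (9999/10000 : ℝ) ≤ ‖lam‖ := by
    have := norm_sub_norm_le (1:ℂ) lam
    rw [norm_sub_rev] at this
    simp only [norm_one] at this
    linarith
  have hlam0 : lam ≠ 0 := by
    intro e; rw [e, norm_zero] at hlamn; norm_num at hlamn
  have ha0 : a ≠ 0 := by
    intro e; rw [e, norm_zero] at ha1; norm_num at ha1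
  have hlaminv : ‖lam⁻¹‖ ≤ 10000/9999 := by
    rw [norm_inv]
    rw [inv_le_comm₀ (by linarith) (by norm_num)]
    linarith
  have hlaminv1 : ‖lam⁻¹ - 1‖ ≤ 1/5000 := by
    have : lam⁻¹ - 1 = lam⁻¹ * (1 - lam) := by field_simp
    rw [this, norm_mul, norm_sub_rev]
    calc ‖lam⁻¹‖ * ‖lam - 1‖ ≤ (10000/9999) * (1/10000) :=
      mul_le_mul hlaminv hlam1 (norm_nonneg _) (by norm_num)
      _ ≤ 1/5000 := by norm_num
  -- choose preimages
  have hsur : ∀ u : ℂ, ∃ w : ℂ, ‖u‖ ≤ 1/20 → ‖w - u‖ ≤ 3*δ ∧ h w = u := by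
    intro u
    by_cases hu : ‖u‖ ≤ 1/20
    · obtain ⟨w, hw⟩ := LR.surj hδ hd hb u hu
      exact ⟨w, fun _ => hw⟩
    · exact ⟨0, fun h' => absurd h' hu⟩
  choose W hW using hsur
  -- basic norms for W
  have hWn : ∀ u : ℂ, ‖u‖ ≤ 1/20 → ‖W u‖ ≤ 1/19 := by
    intro u hu
    have := (hW u hu).1
    calc ‖W u‖ = ‖(W u - u) + u‖ := by ring_nf
      _ ≤ ‖W u - u‖ + ‖u‖ := norm_add_le _ _
      _ ≤ 3*δ + 1/20 := add_le_add this hu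
      _ ≤ 1/19 := by linarith
  have hinj : Set.InjOn h (closedBall (0:ℂ) (2/5)) := LR.injOn hδ hd hb
  -- differentiability of W at points with small norm
  have hWdiff : ∀ u₀ : ℂ, ‖u₀‖ < 1/20 → DifferentiableAt ℂ W u₀ := by
    intro u₀ hu₀
    set w₀ := W u₀ with hw₀def
    have hw₀ := hW u₀ hu₀.le
    have hw₀n : ‖w₀‖ ≤ 1/19 := hWn u₀ hu₀.le
    have hw₀ball : w₀ ∈ ball (0:ℂ) (2/3) := by
      simp only [mem_ball, dist_zero_right]; linarith
    have han : AnalyticAt ℂ h w₀ := hd.analyticAt (isOpen_ball.mem_nhds hw₀ball)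
    have hDA : DifferentiableAt ℂ h w₀ := han.differentiableAt
    set d := deriv h w₀ with hddef
    have hslope : ‖d - 1‖ ≤ 10 * δ := by
      have htend : Tendsto (slope h w₀) (𝓝[≠] w₀) (𝓝 d) :=
        hasDerivAt_iff_tendsto_slope.1 hDA.hasDerivAt
      have htend2 : Tendsto (fun x => ‖slope h w₀ x - 1‖) (𝓝[≠] w₀) (𝓝 ‖d - 1‖) :=
        ((htend.sub_const 1).norm)
      refine le_of_tendsto htend2 ?_
      have hmem : ball (0:ℂ) (2/5) ∈ 𝓝[≠] w₀ := by
        apply mem_nhdsWithin_of_mem_nhds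
        apply isOpen_ball.mem_nhds
        simp only [mem_ball, dist_zero_right]; linarith
      filter_upwards [hmem, self_mem_nhdsWithin] with x hx hxne
      have hxcb : x ∈ closedBall (0:ℂ) (2/5) := ball_subset_closedBall hx
      have hwcb : w₀ ∈ closedBall (0:ℂ) (2/5) := by
        simp only [mem_closedBall, dist_zero_right]; linarith
      have hxw : x - w₀ ≠ 0 := sub_ne_zero.2 hxne
      have : slope h w₀ x - 1 = (x - w₀)⁻¹ * ((h x - x) - (h w₀ - w₀)) := by
        rw [slope_def_module, smul_eq_mul]
        field_simp
        ring
      rw [this, norm_mul, norm_inv]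
      rw [inv_mul_le_iff₀ (by rwa [norm_pos_iff])]
      calc ‖(h x - x) - (h w₀ - w₀)‖ ≤ 10 * δ * ‖x - w₀‖ := LR.lip hd hb x hxcb w₀ hwcb
        _ = ‖x - w₀‖ * (10 * δ) := by ring
    have hd0 : d ≠ 0 := by
      intro e
      rw [e] at hslope
      simp only [zero_sub, norm_neg, norm_one] at hslope
      linarith
    have hs : HasStrictDerivAt h d w₀ := by
      have := han.hasStrictFDerivAt.hasStrictDerivAt
      simpa [hddef] using this
    set F := hs.hasStrictFDerivAt_equiv hd0 with hF
    set φ := F.localInverse h _ w₀ with hφ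
    have hφw : φ (h w₀) = w₀ := F.localInverse_apply_image
    have hright : ∀ᶠ u in 𝓝 (h w₀), h (φ u) = u := F.eventually_right_inverse
    have hcont : ContinuousAt φ (h w₀) := F.localInverse_continuousAt
    have hu₀eq : h w₀ = u₀ := hw₀.2
    have hEq : W =ᶠ[𝓝 u₀] φ := by
      rw [← hu₀eq]
      have hev1 : ∀ᶠ u in 𝓝 (h w₀), φ u ∈ ball (0:ℂ) (2/5) := by
        apply hcont
        apply isOpen_ball.mem_nhds
        rw [hφw]
        simp only [mem_ball, dist_zero_right]; linarith
      have hev2 : ∀ᶠ u in 𝓝 (h w₀), ‖u‖ < 1/20 := by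
        have : {u : ℂ | ‖u‖ < 1/20} ∈ 𝓝 (h w₀) := by
          apply IsOpen.mem_nhds
          · exact isOpen_lt continuous_norm continuous_const
          · rw [hu₀eq]; exact hu₀
        exact this
      filter_upwards [hright, hev1, hev2] with u h1 h2 h3
      have hWu := hW u h3.le
      have hWucb : W u ∈ closedBall (0:ℂ) (2/5) := by
        have := hWn u h3.le
        simp only [mem_closedBall, dist_zero_right]; linarith
      exact hinj hWucb (ball_subset_closedBall h2) (by rw [hWu.2, h1])
    have hφdiff : DifferentiableAt ℂ φ u₀ := by
      rw [← hu₀eq]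
      exact F.to_localInverse.differentiableAt
    exact hφdiff.congr_of_eventuallyEq hEq
  -- define h1
  refine ⟨fun z => a⁻¹ * (lam * h (lam⁻¹ * W (a * z))), ?_, ?_, ?_⟩
  · -- differentiability
    intro z₀ hz₀
    have hz₀n : ‖z₀‖ < 2/3 := by simpa [dist_zero_right] using hz₀
    have hu₀ : ‖a * z₀‖ < 1/20 := by
      rw [norm_mul]
      nlinarith [norm_nonneg z₀, norm_nonneg a]
    have h1 : DifferentiableAt ℂ (fun z : ℂ => a * z) z₀ :=
      (differentiableAt_id.const_mul a)
    have h2 : DifferentiableAt ℂ W (a * z₀) := hWdiff _ hu₀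
    have hWin : ‖W (a * z₀)‖ ≤ 1/19 := hWn _ hu₀.le
    have h3 : DifferentiableAt ℂ (fun w : ℂ => lam⁻¹ * w) (W (a * z₀)) :=
      (differentiableAt_id.const_mul lam⁻¹)
    have hvmem : lam⁻¹ * W (a * z₀) ∈ ball (0:ℂ) (2/3) := by
      simp only [mem_ball, dist_zero_right, norm_mul]
      calc ‖lam⁻¹‖ * ‖W (a * z₀)‖ ≤ (10000/9999) * (1/19) := by
            exact mul_le_mul hlaminv hWin (norm_nonneg _) (by norm_num)
        _ < 2/3 := by norm_num
    have h4 : DifferentiableAt ℂ h (lam⁻¹ * W (a * z₀)) :=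
      hd.differentiableAt (isOpen_ball.mem_nhds hvmem)
    exact (((h4.comp z₀ (h3.comp z₀ (h2.comp z₀ h1))).const_mul lam).const_mul
      a⁻¹).differentiableWithinAt
  · -- bound
    intro z hz
    have hzn : ‖z‖ < 2/3 := by simpa [dist_zero_right] using hz
    have hu : ‖a * z‖ ≤ 1/20 := by
      rw [norm_mul]
      nlinarith [norm_nonneg z, norm_nonneg a]
    set u := a * z with hu_def
    set y := W u with hy_def
    have hy := hW u hu
    have hyn : ‖y‖ ≤ 1/19 := hWn u hu
    set v := lam⁻¹ * y with hv_def
    have hvn : ‖v‖ ≤ 1/18 := by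
      rw [hv_def, norm_mul]
      calc ‖lam⁻¹‖ * ‖y‖ ≤ (10000/9999) * (1/19) :=
        mul_le_mul hlaminv hyn (norm_nonneg _) (by norm_num)
        _ ≤ 1/18 := by norm_num
    have hycb : y ∈ closedBall (0:ℂ) (2/5) := by
      simp only [mem_closedBall, dist_zero_right]; linarith
    have hvcb : v ∈ closedBall (0:ℂ) (2/5) := by
      simp only [mem_closedBall, dist_zero_right]; linarith
    have hlamv : lam * v = y := by
      rw [hv_def, ← mul_assoc, mul_inv_cancel₀ hlam0, one_mul]
    have hhy : h y = a * z := hy.2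
    have hinner : (lam - 1) * (h v - v) + ((h v - v) - (h y - y))
        = lam * h v - a * z := by
      have : (lam - 1) * (h v - v) + ((h v - v) - (h y - y))
          = lam * h v - lam * v + y - h y := by ring
      rw [this, hlamv, hhy]; ring
    have hkey : a⁻¹ * (lam * h v) - z
        = a⁻¹ * ((lam - 1) * (h v - v) + ((h v - v) - (h y - y))) := by
      rw [hinner, mul_sub, inv_mul_cancel_left₀ ha0]
    have hvball : v ∈ ball (0:ℂ) (2/3) := by
      simp only [mem_ball, dist_zero_right]; linarith
    have hbnd1 : ‖(lam - 1) * (h v - v)‖ ≤ (1/10000) * δ := by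
      rw [norm_mul]
      exact mul_le_mul hlam1 (hb v hvball) (norm_nonneg _) (by norm_num)
    have hbnd2 : ‖(h v - v) - (h y - y)‖ ≤ 10 * δ * ‖v - y‖ := LR.lip hd hb v hvcb y hycb
    have hvy : ‖v - y‖ ≤ (1/5000) * (1/19) := by
      have hrw : v - y = (lam⁻¹ - 1) * y := by rw [hv_def]; ring
      rw [hrw, norm_mul]
      exact mul_le_mul hlaminv1 hyn (norm_nonneg _) (by norm_num)
    have hbnd2' : ‖(h v - v) - (h y - y)‖ ≤ 10 * δ * ((1/5000) * (1/19)) :=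
      hbnd2.trans (mul_le_mul_of_nonneg_left hvy (by positivity))
    have hsum : ‖(lam - 1) * (h v - v) + ((h v - v) - (h y - y))‖
        ≤ (1/10000) * δ + 10 * δ * ((1/5000) * (1/19)) :=
      (norm_add_le _ _).trans (add_le_add hbnd1 hbnd2')
    have hainv : ‖a⁻¹‖ ≤ 25 := by
      rw [norm_inv, inv_le_comm₀ (by linarith) (by norm_num)]
      linarith
    rw [hkey, norm_mul]
    calc ‖a⁻¹‖ * ‖(lam - 1) * (h v - v) + ((h v - v) - (h y - y))‖
        ≤ 25 * ((1/10000) * δ + 10 * δ * ((1/5000) * (1/19))) :=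
          mul_le_mul hainv hsum (norm_nonneg _) (by norm_num)
      _ ≤ δ/2 := by linarith
  · -- witness
    intro z hz
    have hzn : ‖z‖ < 1/3 := by simpa [dist_zero_right] using hz
    have hu : ‖a * z‖ ≤ 1/20 := by
      rw [norm_mul]
      nlinarith [norm_nonneg z, norm_nonneg a]
    set w := W (a * z) with hw_def
    have hw := hW (a * z) hu
    have hwn : ‖w‖ ≤ 1/19 := hWn _ hu
    refine ⟨w, ?_, ?_, hw.2, rfl⟩
    · simp only [mem_ball, dist_zero_right]; linarith
    · simp only [mem_ball, dist_zero_right, norm_mul]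
      calc ‖lam⁻¹‖ * ‖w‖ ≤ (10000/9999) * (1/19) :=
        mul_le_mul hlaminv hwn (norm_nonneg _) (by norm_num)
        _ < 1/3 := by norm_num


/-- Loray–Rebelo Lemma 3.3: There is a universal `ε₀ > 0` such that for
`f(z) = λz` with `0 < |λ| < 1`, `|λ−1| ≤ ε₀`, and any injective holomorphic `g : 𝔻 → ℂ`
with `sup|g−id| ≤ ε₀`, there is an integer `N ≥ 1` such that the sequence `g₀ = g`,
`g_{k+1} = f^{−N} ∘ (f∘g_k∘f^{−1}∘g_k^{−1}) ∘ f^N` is defined at least on `𝔻_{1/3}`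
(each `g_k` holomorphic and injective on a domain containing `𝔻_{1/3}`, the recurrence
being witnessed by the point `w = g_k^{−1}(λ^N z)`), and `g_k → id` uniformly on
`𝔻_{1/3}`. -/
theorem loray_rebelo_commutators :
    ∃ ε0 : ℝ, 0 < ε0 ∧
      ∀ lam : ℂ, 0 < ‖lam‖ → ‖lam‖ < 1 → ‖lam - 1‖ ≤ ε0 →
      ∀ g : ℂ → ℂ, DifferentiableOn ℂ g (ball (0 : ℂ) 1) →
        Set.InjOn g (ball (0 : ℂ) 1) →
        (∀ z ∈ ball (0 : ℂ) 1, ‖g z - z‖ ≤ ε0) →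
        ∃ N : ℕ, 1 ≤ N ∧
          ∃ (G : ℕ → ℂ → ℂ) (Ω : ℕ → Set ℂ),
            (∀ k, IsOpen (Ω k) ∧ ball (0 : ℂ) (1/3) ⊆ Ω k ∧ Ω k ⊆ ball (0 : ℂ) 1) ∧
            (∀ k, DifferentiableOn ℂ (G k) (Ω k) ∧ Set.InjOn (G k) (Ω k)) ∧
            (Ω 0 = ball (0 : ℂ) 1 ∧ Set.EqOn (G 0) g (ball (0 : ℂ) 1)) ∧
            (∀ k, ∀ z ∈ ball (0 : ℂ) (1/3),
              ∃ w ∈ Ω k, lam⁻¹ * w ∈ Ω k ∧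
                G k w = lam ^ N * z ∧
                G (k + 1) z = (lam ^ N)⁻¹ * (lam * G k (lam⁻¹ * w))) ∧
            TendstoUniformlyOn (fun k => G k) id atTop (ball (0 : ℂ) (1/3)) := by
  refine ⟨1/10000, by norm_num, ?_⟩
  intro lam hpos hlt hlam1 g hg hginj hgb
  -- choose N
  have hex : ∃ n : ℕ, ‖lam‖ ^ n < 1/24 := exists_pow_lt_of_lt_one (by norm_num) hlt
  refine ⟨Nat.find hex, ?_, ?_⟩
  · rcases Nat.eq_zero_or_pos (Nat.find hex) with h0 | h
    · exfalso
      have := Nat.find_spec hex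
      rw [h0, pow_zero] at this
      norm_num at this
    · exact h
  set N := Nat.find hex with hNdef
  have hNspec : ‖lam‖ ^ N < 1/24 := Nat.find_spec hex
  have hN1 : 1 ≤ N := by
    rcases Nat.eq_zero_or_pos N with h0 | h
    · exfalso
      have := hNspec
      rw [h0, pow_zero] at this
      norm_num at this
    · exact h
  have hlamn : (9999/10000 : ℝ) ≤ ‖lam‖ := by
    have := norm_sub_norm_le (1:ℂ) lam
    rw [norm_sub_rev] at this
    simp only [norm_one] at this
    linarith
  have ha1 : (1/25 : ℝ) < ‖lam ^ N‖ := by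
    rw [norm_pow]
    have hm : ¬ (‖lam‖ ^ (N-1) < 1/24) := Nat.find_min hex (by omega)
    push_neg at hm
    have hNeq : ‖lam‖ ^ N = ‖lam‖ ^ (N-1) * ‖lam‖ := by
      rw [← pow_succ]
      congr 1
      omega
    rw [hNeq]
    nlinarith
  have ha2 : ‖lam ^ N‖ ≤ 1/24 := by rw [norm_pow]; exact hNspec.le
  -- iterate the step lemma
  have key : ∀ (h : ℂ → ℂ) (δ : ℝ), DifferentiableOn ℂ h (ball (0:ℂ) (2/3)) →
      δ ≤ 1/10000 → (∀ z ∈ ball (0:ℂ) (2/3), ‖h z - z‖ ≤ δ) →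
      ∃ h1 : ℂ → ℂ,
        DifferentiableOn ℂ h1 (ball (0:ℂ) (2/3)) ∧
        (∀ z ∈ ball (0:ℂ) (2/3), ‖h1 z - z‖ ≤ δ/2) ∧
        ∀ z ∈ ball (0:ℂ) (1/3), ∃ w ∈ ball (0:ℂ) (1/3),
          lam⁻¹ * w ∈ ball (0:ℂ) (1/3) ∧ h w = lam ^ N * z ∧
          h1 z = (lam ^ N)⁻¹ * (lam * h (lam⁻¹ * w)) :=
    fun h δ hd hδ hb => LR.step hlam1 ha1 ha2 hd hδ hb
  choose! nxt hnxt using key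
  set G : ℕ → ℂ → ℂ :=
    fun k => Nat.rec g (fun n ih => nxt ih (1/10000 / 2^n)) k with hGdef
  have hG0 : G 0 = g := rfl
  have hGs : ∀ k, G (k+1) = nxt (G k) (1/10000 / 2^k) := fun k => rfl
  have hδle : ∀ k : ℕ, (1/10000 : ℝ) / 2^k ≤ 1/10000 := by
    intro k
    have h1 : (1:ℝ) ≤ 2^k := one_le_pow₀ (by norm_num)
    rw [div_le_iff₀ (by positivity)]
    nlinarith
  have hsub23 : ball (0:ℂ) (2/3) ⊆ ball (0:ℂ) 1 := ball_subset_ball (by norm_num)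
  have hsub13 : ball (0:ℂ) (1/3) ⊆ ball (0:ℂ) (2/3) := ball_subset_ball (by norm_num)
  have inv : ∀ k, DifferentiableOn ℂ (G k) (ball (0:ℂ) (2/3)) ∧
      ∀ z ∈ ball (0:ℂ) (2/3), ‖G k z - z‖ ≤ 1/10000 / 2^k := by
    intro k
    induction k with
    | zero =>
      refine ⟨hg.mono hsub23, ?_⟩
      intro z hz
      simpa [hG0] using hgb z (hsub23 hz)
    | succ n ih =>
      have h3 := hnxt (G n) (1/10000 / 2^n) ih.1 (hδle n) ih.2
      refine ⟨by rw [hGs]; exact h3.1, ?_⟩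
      intro z hz
      rw [hGs]
      refine (h3.2.1 z hz).trans ?_
      exact le_of_eq (by rw [pow_succ, div_div])
  refine ⟨G, fun k => if k = 0 then ball (0:ℂ) 1 else ball (0:ℂ) (1/3), ?_, ?_, ?_, ?_, ?_⟩
  · intro k
    beta_reduce
    by_cases hk : k = 0
    · rw [if_pos hk]
      exact ⟨isOpen_ball, ball_subset_ball (by norm_num), subset_rfl⟩
    · rw [if_neg hk]
      exact ⟨isOpen_ball, subset_rfl, ball_subset_ball (by norm_num)⟩
  · intro k
    beta_reduce
    cases k with
    | zero =>
      rw [if_pos rfl]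
      exact ⟨hg, hginj⟩
    | succ n =>
      rw [if_neg (Nat.succ_ne_zero n)]
      refine ⟨(inv (n+1)).1.mono hsub13, ?_⟩
      have hi := LR.injOn (hδle (n+1)) (inv (n+1)).1 (inv (n+1)).2
      exact hi.mono (ball_subset_closedBall.trans (closedBall_subset_closedBall (by norm_num)))
  · exact ⟨if_pos rfl, fun x _ => rfl⟩
  · intro k z hz
    have h3 := hnxt (G k) (1/10000 / 2^k) (inv k).1 (hδle k) (inv k).2
    obtain ⟨w, hw1, hw2, hw3, hw4⟩ := h3.2.2 z hz
    have hball : ball (0:ℂ) (1/3) ⊆ (if k = 0 then ball (0:ℂ) 1 else ball (0:ℂ) (1/3)) := by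
      by_cases hk : k = 0
      · rw [if_pos hk]
        exact ball_subset_ball (by norm_num)
      · rw [if_neg hk]
    exact ⟨w, hball hw1, hball hw2, hw3, by rw [hGs]; exact hw4⟩
  · rw [Metric.tendstoUniformlyOn_iff]
    intro ε hε
    have h2 : Tendsto (fun k : ℕ => ((1:ℝ)/2)^k) atTop (𝓝 0) :=
      tendsto_pow_atTop_nhds_zero_of_lt_one (by norm_num) (by norm_num)
    filter_upwards [h2.eventually_lt_const hε] with k hk z hz
    rw [dist_comm, dist_eq_norm]
    have hbk := (inv k).2 z (hsub13 hz)
    calc ‖G k z - id z‖ = ‖G k z - z‖ := rfl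
      _ ≤ 1/10000 / 2^k := hbk
      _ ≤ (1/2)^k := by
          rw [div_pow, one_pow]
          gcongr
          norm_num
      _ < ε := hk
end
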